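/- For every n-store multi-automaton A = (Q, Σ, Δ, {q^1,…,q^z}, Q_f) (assumed total when n = 1), the complement automaton Ā constructed by the inversion-of-target-sets construction satisfies L(Ā^{q^j}) = the complement of L(A^{q^j}) for every j ∈ {1,…,z}; the construction is at most exponential in the size of A. In particular, regular sets of configurations of order-n (A)PDSs are closed under complementation. -/

import Mathlib

namespace HOPDS

/-- `St α k` is the type of order-`(k+1)` stores over the alphabet `α`
(so an `n`-store, for `n ≥ 1`, is a term of type `St α (n-1)`).
An order-1 store is a finite word; an order-`(k+2)` store is a nonempty
list (encoded as head plus tail of the list) of order-`(k+1)` stores. -/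
def St (α : Type) : ℕ → Type
  | 0 => List α
  | k + 1 => St α k × List (St α k)

/-- the `top₁` symbol of a store (`none` on an empty order-1 store) -/
def St.top1 {α : Type} : (k : ℕ) → St α k → Option α
  | 0, w => List.head? w
  | k + 1, s => St.top1 k s.1

/-- Stack operations: `pushw w` is `push_w` (with `pop₁ = push_ε`);
`push l` / `pop l` are `push_l` / `pop_l`. -/
inductive Op (α : Type) where
  | pushw : List α → Op α
  | push : ℕ → Op α
  | pop : ℕ → Op α

/-- `Op.Valid n o` says that `o` belongs to `O_n`. -/
def Op.Valid {α : Type} (n : ℕ) : Op α → Prop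
  | .pushw _ => True
  | .push l => 2 ≤ l ∧ l ≤ n
  | .pop l => 2 ≤ l ∧ l ≤ n

/-- partial application of a stack operation to an order-`(k+1)` store -/
def Op.apply {α : Type} : (k : ℕ) → Op α → St α k → Option (St α k)
  | 0, .pushw w, s =>
      match (s : List α) with
      | [] => none
      | _ :: t => some ((w ++ t : List α))
  | 0, .push _, _ => none
  | 0, .pop _, _ => none
  | k + 1, .pushw w, s =>
      (Op.apply k (.pushw w) s.1).map fun t' => ((t', s.2) : St α (k+1))
  | k + 1, .push l, s =>
      if l = k + 2 then some ((s.1, s.1 :: s.2) : St α (k+1))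
      else (Op.apply k (.push l) s.1).map fun t' => ((t', s.2) : St α (k+1))
  | k + 1, .pop l, s =>
      if l = k + 2 then
        match s.2 with
        | [] => none
        | r :: rs => some ((r, rs) : St α (k+1))
      else (Op.apply k (.pop l) s.1).map fun t' => ((t', s.2) : St α (k+1))

/-- configurations of an order-`(k+1)` pushdown system -/
abbrev PConf (P α : Type) (k : ℕ) := P × St α k

/-- one transition `⟨p,γ⟩ ↪ ⟨p',γ'⟩` of an order-`(k+1)` PDS with commands `D` -/
def PStep {P α : Type} {k : ℕ} (D : Set (P × α × Op α × P)) (c c' : PConf P α k) : Prop :=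
  ∃ a o, (c.1, a, o, c'.1) ∈ D ∧ St.top1 k c.2 = some a ∧ Op.apply k o c.2 = some c'.2

def PPreStar {P α : Type} {k : ℕ} (D : Set (P × α × Op α × P)) (C : Set (PConf P α k)) :
    Set (PConf P α k) :=
  {c | ∃ c' ∈ C, Relation.ReflTransGen (PStep D) c c'}

def PPrePlus {P α : Type} {k : ℕ} (D : Set (P × α × Op α × P)) (C : Set (PConf P α k)) :
    Set (PConf P α k) :=
  {c | ∃ c' ∈ C, Relation.TransGen (PStep D) c c'}

/-- configurations of an order-`(k+1)` alternating PDS; `none` is the undefined store `∇` -/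
abbrev AConf (P α : Type) (k : ℕ) := P × Option (St α k)

/-- `⟨p,γ⟩ ↪ C` for an APDS with commands `D ⊆ P × Σ × 2^(O_n × P)` -/
def AStep {P α : Type} {k : ℕ} (D : Set (P × α × Set (Op α × P)))
    (c : AConf P α k) (C : Set (AConf P α k)) : Prop :=
  ∃ p γ a OP, c = (p, some γ) ∧ (p, a, OP) ∈ D ∧ St.top1 k γ = some a ∧
    C = {c' | ∃ o p' δ, (o, p') ∈ OP ∧ Op.apply k o γ = some δ ∧ c' = (p', some δ)}
      ∪ {c' | (∃ o p', (o, p') ∈ OP ∧ Op.apply k o γ = none) ∧ c' = (p, none)}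

/-- extension of `↪` to sets of configurations -/
def ASetStep {P α : Type} {k : ℕ} (D : Set (P × α × Set (Op α × P)))
    (X Y : Set (AConf P α k)) : Prop :=
  ∃ c C C', AStep D c C ∧ c ∉ C' ∧ X = insert c C' ∧ Y = C' ∪ C

/-- `Pre*(C_Init)` for an APDS: the configurations `c` with `{c} ↪* C ⊆ C_Init` -/
def APreStar {P α : Type} {k : ℕ} (D : Set (P × α × Set (Op α × P)))
    (CI : Set (AConf P α k)) : Set (AConf P α k) :=
  {c | ∃ C, Relation.ReflTransGen (ASetStep D) {c} C ∧ C ⊆ CI}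

/-- one alternating step: choose one transition from every state of `S` and union the targets -/
def setStep {L : Type} (tr : ℕ → L → Set ℕ → Prop) (l : L) (S S' : Set ℕ) : Prop :=
  ∃ f : ℕ → Set ℕ, (∀ q ∈ S, tr q l (f q)) ∧ S' = ⋃ q ∈ S, f q

/-- alternating run over a word of labels -/
inductive listRun {L : Type} (tr : ℕ → L → Set ℕ → Prop) : List L → Set ℕ → Set ℕ → Prop
  | nil (S : Set ℕ) : listRun tr [] S S
  | cons {l : L} {ls : List L} {S S1 S2 : Set ℕ} :
      setStep tr l S S1 → listRun tr ls S1 S2 → listRun tr (l :: ls) S S2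

/-- Alternating order-`(k+1)` store automata: states drawn from `ℕ`, a finite list of
transitions labelled (at higher orders) by order-`k` store automata, an initial state,
and a finite list of final states. -/
def SA (α : Type) : ℕ → Type
  | 0 => List (ℕ × α × List ℕ) × ℕ × List ℕ
  | k + 1 => List (ℕ × SA α k × List ℕ) × ℕ × List ℕ

/-- the initial state of a store automaton -/
def SA.init {α : Type} : (k : ℕ) → SA α k → ℕ
  | 0, A => A.2.1
  | _ + 1, A => A.2.1

/-- acceptance of an order-`(k+1)` store from state `q`: an alternating run over the
word of (sub)stores ending in a set of final states, where at each step every label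
must accept the store being read -/
def SA.accFrom {α : Type} : (k : ℕ) → SA α k → ℕ → St α k → Prop
  | 0, A, q, w =>
      ∃ S, listRun (fun q' a T => ∃ L, (q', a, L) ∈ A.1 ∧ T = {x | x ∈ L})
          (w : List α) {q} S ∧
        S ⊆ {x | x ∈ A.2.2}
  | k + 1, A, q, s =>
      ∃ S,
        listRun
          (fun q' γ T => ∃ B L, (q', B, L) ∈ A.1 ∧ SA.accFrom k B (SA.init k B) γ ∧
            T = {x | x ∈ L})
          (s.1 :: s.2) {q} S ∧
        S ⊆ {x | x ∈ A.2.2}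

/-- acceptance from the initial state -/
def SA.acc {α : Type} {k : ℕ} (A : SA α k) (s : St α k) : Prop :=
  SA.accFrom k A (SA.init k A) s

/-- size of a store automaton (transitions counted recursively) -/
def SA.size {α : Type} : (k : ℕ) → SA α k → ℕ
  | 0, A => A.1.length + A.2.2.length + 1
  | k + 1, A =>
      (A.1.map fun t => SA.size k t.2.1 + t.2.2.length + 1).sum + A.2.2.length + 1

/-- An order-`(k+1)`-store multi-automaton: a shared store automaton together with
one initial state per control state, and possible `∇`-transitions (`nabla p` holds iff
there is a transition `q^p —∇→ {q^ε_f}`). -/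
structure MSA (α P : Type) (k : ℕ) where
  core : SA α k
  inits : P → ℕ
  nabla : Set P

/-- the set of configurations accepted by a multi-automaton -/
def MSA.Lang {α P : Type} {k : ℕ} (M : MSA α P k) : Set (AConf P α k) :=
  {c | (∃ s, c.2 = some s ∧ SA.accFrom k M.core (M.inits c.1) s) ∨
       (c.2 = none ∧ c.1 ∈ M.nabla)}

def MSA.size {α P : Type} {k : ℕ} (M : MSA α P k) : ℕ := SA.size k M.core

/-- regular sets of configurations: those recognised by a store multi-automaton -/
def Regular {α P : Type} {k : ℕ} (C : Set (AConf P α k)) : Prop :=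
  ∃ M : MSA α P k, M.Lang = C

/-- tower of exponentials: `tower n x = exp_n(x)` -/
def tower : ℕ → ℕ → ℕ
  | 0, x => x
  | n + 1, x => 2 ^ tower n x

/-- Büchi acceptance: an infinite run visiting accepting control states infinitely often -/
def BuchiAcc {P α : Type} {k : ℕ} (D : Set (P × α × Op α × P)) (F : Set P)
    (c : PConf P α k) : Prop :=
  ∃ r : ℕ → PConf P α k,
    r 0 = c ∧ (∀ i, PStep D (r i) (r (i + 1))) ∧ ∀ i, ∃ j, i ≤ j ∧ (r j).1 ∈ F

/-- the store `[^n a]^n` (each level a singleton) -/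
def unitSt {α : Type} (a : α) : (k : ℕ) → St α k
  | 0 => [a]
  | k + 1 => ((unitSt a k, []) : St α (k+1))

/-- Eloise's attractor for a reachability game with step relation `step`,
Eloise-owned configurations `E` and target set `R`:  `Attr_E(R) = ⋃ᵢ Attrⁱ_E(R)`. -/
def AttrE {C : Type} (step : C → C → Prop) (E : Set C) (R : Set C) : Set C :=
  ⋃ i,
    (fun X => X ∪ {c | c ∈ E ∧ ∃ c', step c c' ∧ c' ∈ X}
                ∪ {c | c ∉ E ∧ ∀ c', step c c' → c' ∈ X})^[i] R

end HOPDS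

namespace HOPDS

/-- totality of a store automaton: required only at order 1 (`k = 0`), where every state
must have a transition for every letter; vacuous at higher orders. -/
def SA.IsTotal {α : Type} : (k : ℕ) → SA α k → Prop
  | 0, A => ∀ (q : ℕ) (a : α), ∃ L, (q, a, L) ∈ A.1
  | _ + 1, _ => True

/-! ### Auxiliary development for the complementation theorem -/

attribute [local instance] Classical.propDecidable

section RecSemantics

variable {Γ Lab : Type}

/-- the transition relation of an alternating automaton with transition list `δ`,
where labels are interpreted through a satisfaction relation `sat` -/
def trOf (sat : Lab → Γ → Prop) (δ : List (ℕ × Lab × List ℕ)) :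
    ℕ → Γ → Set ℕ → Prop :=
  fun q γ T => ∃ B L, (q, B, L) ∈ δ ∧ sat B γ ∧ T = {x | x ∈ L}

/-- recursive (state-by-state) acceptance for alternating automata over words -/
def Rec (sat : Lab → Γ → Prop) (δ : List (ℕ × Lab × List ℕ)) (F : List ℕ) :
    List Γ → ℕ → Prop
  | [], q => q ∈ F
  | γ :: w, q => ∃ B L, (q, B, L) ∈ δ ∧ sat B γ ∧ ∀ q' ∈ L, Rec sat δ F w q'

theorem Rec_nil {sat : Lab → Γ → Prop} {δ F q} : Rec sat δ F [] q ↔ q ∈ F := Iff.rfl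

theorem Rec_cons {sat : Lab → Γ → Prop} {δ F q} {γ : Γ} {w} :
    Rec sat δ F (γ :: w) q ↔
      ∃ B L, (q, B, L) ∈ δ ∧ sat B γ ∧ ∀ q' ∈ L, Rec sat δ F w q' := Iff.rfl

theorem listRun_congr {tr tr' : ℕ → Γ → Set ℕ → Prop}
    (h : ∀ q γ T, tr q γ T ↔ tr' q γ T) :
    ∀ {w : List Γ} {S0 S : Set ℕ}, listRun tr w S0 S → listRun tr' w S0 S := by
  intro w S0 S hr
  induction hr with
  | nil S => exact listRun.nil S
  | cons hstep _ ih =>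
    obtain ⟨f, hf, rfl⟩ := hstep
    exact listRun.cons ⟨f, fun q hq => (h _ _ _).1 (hf q hq), rfl⟩ ih

theorem listRun_toRec {sat : Lab → Γ → Prop} {δ F} :
    ∀ {w : List Γ} {S0 S : Set ℕ}, listRun (trOf sat δ) w S0 S → S ⊆ {x | x ∈ F} →
      ∀ q ∈ S0, Rec sat δ F w q := by
  intro w S0 S h
  induction h with
  | nil S => exact fun hS q hq => hS hq
  | cons hstep _ ih =>
    intro hS q hq
    obtain ⟨f, hf, rfl⟩ := hstep
    obtain ⟨B, L, hmem, hsat, hT⟩ := hf q hq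
    refine ⟨B, L, hmem, hsat, fun q' hq' => ih hS q' ?_⟩
    exact Set.mem_biUnion hq (by rw [hT]; exact hq')

theorem rec_toListRun {sat : Lab → Γ → Prop} {δ F} :
    ∀ (w : List Γ) (S0 : Set ℕ), S0.Finite → (∀ q ∈ S0, Rec sat δ F w q) →
      ∃ S, listRun (trOf sat δ) w S0 S ∧ S ⊆ {x | x ∈ F} := by
  intro w
  induction w with
  | nil => exact fun S0 _ h => ⟨S0, listRun.nil S0, h⟩
  | cons γ w ih =>
    intro S0 hfin h
    choose B L hmem hsat hrec using h
    set f : ℕ → Set ℕ := fun q => if hq : q ∈ S0 then {x | x ∈ L q hq} else ∅ with hf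
    have hstep : setStep (trOf sat δ) γ S0 (⋃ q ∈ S0, f q) :=
      ⟨f, fun q hq => ⟨B q hq, L q hq, hmem q hq, hsat q hq, by simp [hf, hq]⟩, rfl⟩
    have hfin1 : (⋃ q ∈ S0, f q).Finite := by
      refine Set.Finite.biUnion hfin fun q hq => ?_
      simp only [hf, dif_pos hq]
      exact List.finite_toSet _
    have hrec1 : ∀ q' ∈ ⋃ q ∈ S0, f q, Rec sat δ F w q' := by
      intro q' hq'
      simp only [Set.mem_iUnion] at hq'
      obtain ⟨q, hq, hq'⟩ := hq'
      simp only [hf, dif_pos hq] at hq'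
      exact hrec q hq q' hq'
    obtain ⟨S, hr, hSF⟩ := ih _ hfin1 hrec1
    exact ⟨S, listRun.cons hstep hr, hSF⟩

theorem rec_iff_listRun {sat : Lab → Γ → Prop} {δ F} {w : List Γ} {q : ℕ} :
    (∃ S, listRun (trOf sat δ) w {q} S ∧ S ⊆ {x | x ∈ F}) ↔ Rec sat δ F w q := by
  constructor
  · rintro ⟨S, hr, hF⟩
    exact listRun_toRec hr hF q rfl
  · intro h
    exact rec_toListRun w {q} (Set.finite_singleton q) (by rintro q' rfl; exact h)

end RecSemantics

/-- satisfaction of order-1 letters -/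
def sat0 {α : Type} : α → α → Prop := fun a γ => a = γ

/-- satisfaction of higher-order labels -/
def satS {α : Type} (k : ℕ) : SA α k → St α k → Prop := fun B γ => SA.acc B γ

theorem accFrom_zero_iff {α : Type} (A : SA α 0) (q : ℕ) (w : St α 0) :
    SA.accFrom 0 A q w ↔ Rec sat0 A.1 A.2.2 w q := by
  rw [show SA.accFrom 0 A q w =
      (∃ S, listRun (fun q' a T => ∃ L, (q', a, L) ∈ A.1 ∧ T = {x | x ∈ L})
        (w : List α) {q} S ∧ S ⊆ {x | x ∈ A.2.2}) from rfl]
  refine Iff.trans ?_ rec_iff_listRun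
  constructor
  · rintro ⟨S, hr, hF⟩
    refine ⟨S, listRun_congr (fun q' a T => ?_) hr, hF⟩
    constructor
    · rintro ⟨L, hL, rfl⟩; exact ⟨a, L, hL, rfl, rfl⟩
    · rintro ⟨B, L, hL, rfl, rfl⟩; exact ⟨L, hL, rfl⟩
  · rintro ⟨S, hr, hF⟩
    refine ⟨S, listRun_congr (fun q' a T => ?_) hr, hF⟩
    constructor
    · rintro ⟨B, L, hL, rfl, rfl⟩; exact ⟨L, hL, rfl⟩
    · rintro ⟨L, hL, rfl⟩; exact ⟨a, L, hL, rfl, rfl⟩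

theorem accFrom_succ_iff {α : Type} (k : ℕ) (A : SA α (k + 1)) (q : ℕ) (s : St α (k + 1)) :
    SA.accFrom (k + 1) A q s ↔ Rec (satS k) A.1 A.2.2 (s.1 :: s.2) q := by
  rw [show SA.accFrom (k + 1) A q s =
      (∃ S, listRun (fun q' γ T => ∃ B L, (q', B, L) ∈ A.1 ∧
          SA.accFrom k B (SA.init k B) γ ∧ T = {x | x ∈ L})
        (s.1 :: s.2) {q} S ∧ S ⊆ {x | x ∈ A.2.2}) from rfl, ← rec_iff_listRun]
  constructor
  · rintro ⟨S, hr, hF⟩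
    exact ⟨S, listRun_congr (fun q' γ T => Iff.rfl) hr, hF⟩
  · rintro ⟨S, hr, hF⟩
    exact ⟨S, listRun_congr (fun q' γ T => Iff.rfl) hr, hF⟩

/-! ### Generic embedding lemma -/

theorem rec_embed {Γ Lab : Type} {sat : Lab → Γ → Prop} {δ δ' : List (ℕ × Lab × List ℕ)}
    {F F' : List ℕ} {f : ℕ → ℕ}
    (hδ : ∀ q B L', ((f q, B, L') ∈ δ' ↔ ∃ L, (q, B, L) ∈ δ ∧ L' = L.map f))
    (hF : ∀ q, f q ∈ F' ↔ q ∈ F) :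
    ∀ (w : List Γ) (q : ℕ), Rec sat δ' F' w (f q) ↔ Rec sat δ F w q := by
  intro w
  induction w with
  | nil => intro q; exact hF q
  | cons γ w ih =>
    intro q
    constructor
    · rintro ⟨B, L', hmem, hsat, hrec⟩
      obtain ⟨L, hL, rfl⟩ := (hδ q B L').1 hmem
      exact ⟨B, L, hL, hsat, fun q' hq' =>
        (ih q').1 (hrec (f q') (List.mem_map_of_mem (f := f) hq'))⟩
    · rintro ⟨B, L, hL, hsat, hrec⟩
      refine ⟨B, L.map f, (hδ q B _).2 ⟨L, hL, rfl⟩, hsat, ?_⟩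
      rintro q' hq'
      obtain ⟨x, hx, rfl⟩ := List.mem_map.1 hq'
      exact (ih x).2 (hrec x hx)

/-! ### Bookkeeping of states -/

/-- the list of states determined by an initial state, a transition list and
a list of final states -/
def statesL {Lab : Type} (q0 : ℕ) (δ : List (ℕ × Lab × List ℕ)) (F : List ℕ) : List ℕ :=
  q0 :: ((δ.flatMap fun t => t.1 :: t.2.2) ++ F)

theorem statesL_init {Lab : Type} {q0 δ F} : q0 ∈ statesL (Lab := Lab) q0 δ F :=
  List.mem_cons_self

theorem statesL_src {Lab : Type} {q0 F} {δ : List (ℕ × Lab × List ℕ)} {t}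
    (ht : t ∈ δ) : t.1 ∈ statesL q0 δ F := by
  apply List.mem_cons_of_mem
  exact List.mem_append_left _ (List.mem_flatMap.2 ⟨t, ht, List.mem_cons_self⟩)

theorem statesL_tgt {Lab : Type} {q0 F} {δ : List (ℕ × Lab × List ℕ)} {t q'}
    (ht : t ∈ δ) (hq' : q' ∈ t.2.2) : q' ∈ statesL q0 δ F := by
  apply List.mem_cons_of_mem
  exact List.mem_append_left _
    (List.mem_flatMap.2 ⟨t, ht, List.mem_cons_of_mem _ hq'⟩)

theorem statesL_fin {Lab : Type} {q0 δ F} {q} (hq : q ∈ F) :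
    q ∈ statesL (Lab := Lab) q0 δ F :=
  List.mem_cons_of_mem _ (List.mem_append_right _ hq)

/-- all states occurring in a store automaton -/
def statesOf {α : Type} : (k : ℕ) → SA α k → List ℕ
  | 0, A => statesL A.2.1 A.1 A.2.2
  | _ + 1, A => statesL A.2.1 A.1 A.2.2

/-- a strict upper bound on all states occurring in a store automaton -/
def boundOf {α : Type} (k : ℕ) (A : SA α k) : ℕ := (statesOf k A).foldr max 0 + 1

theorem le_foldr_max : ∀ (l : List ℕ), ∀ q ∈ l, q ≤ l.foldr max 0 := by
  intro l
  induction l with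
  | nil => simp
  | cons a l ih =>
    intro q hq
    rcases List.mem_cons.1 hq with rfl | h
    · exact le_max_left _ _
    · exact le_trans (ih q h) (le_max_right _ _)

theorem lt_boundOf {α : Type} {k : ℕ} {A : SA α k} {q : ℕ} (h : q ∈ statesOf k A) :
    q < boundOf k A := Nat.lt_succ_of_le (le_foldr_max _ q h)

/-! ### Boolean vectors -/

def boolVecs : ℕ → List (List Bool)
  | 0 => [[]]
  | n + 1 => (boolVecs n).flatMap fun v => [true :: v, false :: v]

theorem mem_boolVecs : ∀ {n : ℕ} {v : List Bool}, v ∈ boolVecs n ↔ v.length = n := by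
  intro n
  induction n with
  | zero => intro v; simp [boolVecs, List.length_eq_zero_iff]
  | succ n ih =>
    intro v
    simp only [boolVecs, List.mem_flatMap, List.mem_cons, List.mem_singleton]
    constructor
    · rintro ⟨v', hv', rfl | (rfl | h)⟩
      · simp [ih.1 hv']
      · simp [ih.1 hv']
      · simp at h
    · intro hlen
      match v, hlen with
      | b :: v, hlen =>
        refine ⟨v, ih.2 (by simpa using hlen), ?_⟩
        cases b
        · right; left; rfl
        · left; rfl

/-! ### The automaton accepting all stores -/

def allSA {α : Type} (la : List α) : (k : ℕ) → SA α k
  | 0 => (la.map fun a => (0, a, ([] : List ℕ)), 0, [0])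
  | k + 1 => ([(0, allSA la k, ([] : List ℕ))], 0, [0])

theorem allSA_acc {α : Type} {la : List α} (hla : ∀ a : α, a ∈ la) :
    ∀ (k : ℕ) (s : St α k), SA.acc (allSA la k) s := by
  intro k
  induction k with
  | zero =>
    intro s
    show SA.accFrom 0 _ _ s
    rw [show SA.init 0 (allSA la 0) = 0 from rfl, accFrom_zero_iff]
    match s with
    | ([] : List α) => exact List.mem_singleton.2 rfl
    | (a :: w : List α) =>
      exact ⟨a, [], List.mem_map.2 ⟨a, hla a, rfl⟩, rfl, by simp⟩
  | succ k ih =>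
    intro s
    show SA.accFrom (k + 1) _ _ s
    rw [show SA.init (k + 1) (allSA la (k + 1)) = 0 from rfl, accFrom_succ_iff]
    exact ⟨allSA la k, [], List.mem_singleton.2 rfl, ih s.1, by simp⟩

/-! ### Binary intersection -/

def f1 (q : ℕ) : ℕ := 2 * q + 1
def f2 (q : ℕ) : ℕ := 2 * q + 2

/-- transition list of the disjoint-union-plus-new-initial-state construction -/
def interCore {Lab : Type} (δA δB : List (ℕ × Lab × List ℕ))
    (newt : List (ℕ × Lab × List ℕ)) : List (ℕ × Lab × List ℕ) :=
  newt ++ δA.map (fun t => (f1 t.1, t.2.1, t.2.2.map f1))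
       ++ δB.map (fun t => (f2 t.1, t.2.1, t.2.2.map f2))

theorem interCore_mem_f1 {Lab : Type} {δA δB newt : List (ℕ × Lab × List ℕ)}
    (hnew : ∀ t ∈ newt, t.1 = 0) (q : ℕ) (B : Lab) (L' : List ℕ) :
    ((f1 q, B, L') ∈ interCore δA δB newt ↔ ∃ L, (q, B, L) ∈ δA ∧ L' = L.map f1) := by
  simp only [interCore, List.mem_append, List.mem_map]
  constructor
  · rintro ((h | ⟨t, ht, heq⟩) | ⟨t, ht, heq⟩)
    · exact absurd (hnew _ h) (by simp [f1])
    · simp only [Prod.mk.injEq] at heq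
      obtain ⟨h1, h2, h3⟩ := heq
      have ht1 : t.1 = q := by simp only [f1] at h1; omega
      exact ⟨t.2.2, by rw [← ht1, ← h2]; exact ht, h3.symm⟩
    · simp only [Prod.mk.injEq] at heq
      exact absurd heq.1 (by simp only [f1, f2]; omega)
  · rintro ⟨L, hL, rfl⟩
    exact Or.inl (Or.inr ⟨(q, B, L), hL, rfl⟩)

theorem interCore_mem_f2 {Lab : Type} {δA δB newt : List (ℕ × Lab × List ℕ)}
    (hnew : ∀ t ∈ newt, t.1 = 0) (q : ℕ) (B : Lab) (L' : List ℕ) :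
    ((f2 q, B, L') ∈ interCore δA δB newt ↔ ∃ L, (q, B, L) ∈ δB ∧ L' = L.map f2) := by
  simp only [interCore, List.mem_append, List.mem_map]
  constructor
  · rintro ((h | ⟨t, ht, heq⟩) | ⟨t, ht, heq⟩)
    · exact absurd (hnew _ h) (by simp [f2])
    · simp only [Prod.mk.injEq] at heq
      exact absurd heq.1 (by simp only [f1, f2]; omega)
    · simp only [Prod.mk.injEq] at heq
      obtain ⟨h1, h2, h3⟩ := heq
      have ht1 : t.1 = q := by simp only [f2] at h1; omega
      exact ⟨t.2.2, by rw [← ht1, ← h2]; exact ht, h3.symm⟩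
  · rintro ⟨L, hL, rfl⟩
    exact Or.inr ⟨(q, B, L), hL, rfl⟩

theorem interCore_mem_zero {Lab : Type} {δA δB newt : List (ℕ × Lab × List ℕ)}
    (B : Lab) (L' : List ℕ) :
    ((0, B, L') ∈ interCore δA δB newt ↔ (0, B, L') ∈ newt) := by
  simp only [interCore, List.mem_append, List.mem_map]
  constructor
  · rintro ((h | ⟨t, _, heq⟩) | ⟨t, _, heq⟩)
    · exact h
    · simp only [Prod.mk.injEq] at heq
      exact absurd heq.1 (by simp [f1])
    · simp only [Prod.mk.injEq] at heq
      exact absurd heq.1 (by simp [f2])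
  · exact fun h => Or.inl (Or.inl h)

noncomputable def interFin (FA FB : List ℕ) (c : Prop) : List ℕ :=
  (if c then [0] else []) ++ FA.map f1 ++ FB.map f2

theorem interFin_mem_f1 {FA FB : List ℕ} {c : Prop} (q : ℕ) :
    (f1 q ∈ interFin FA FB c ↔ q ∈ FA) := by
  simp only [interFin, List.mem_append, List.mem_map]
  constructor
  · rintro ((h | ⟨x, hx, heq⟩) | ⟨x, hx, heq⟩)
    · split at h <;> simp [f1] at h
    · have : x = q := by simp only [f1] at heq; omega
      exact this ▸ hx
    · exact absurd heq (by simp only [f1, f2]; omega)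
  · intro h
    exact Or.inl (Or.inr ⟨q, h, rfl⟩)

theorem interFin_mem_f2 {FA FB : List ℕ} {c : Prop} (q : ℕ) :
    (f2 q ∈ interFin FA FB c ↔ q ∈ FB) := by
  simp only [interFin, List.mem_append, List.mem_map]
  constructor
  · rintro ((h | ⟨x, hx, heq⟩) | ⟨x, hx, heq⟩)
    · split at h <;> simp [f2] at h
    · exact absurd heq (by simp only [f1, f2]; omega)
    · have : x = q := by simp only [f2] at heq; omega
      exact this ▸ hx
  · intro h
    exact Or.inr ⟨q, h, rfl⟩

theorem interFin_mem_zero {FA FB : List ℕ} {c : Prop} :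
    ((0 : ℕ) ∈ interFin FA FB c ↔ c) := by
  simp only [interFin, List.mem_append, List.mem_map]
  constructor
  · rintro ((h | ⟨x, _, heq⟩) | ⟨x, _, heq⟩)
    · by_cases hc : c
      · exact hc
      · simp [if_neg hc] at h
    · exact absurd heq (by simp [f1])
    · exact absurd heq (by simp [f2])
  · intro h
    exact Or.inl (Or.inl (by simp [if_pos h]))

/-- the new transitions (from the fresh initial state 0) for the intersection
of two order-1 automata -/
noncomputable def interNew0 {α : Type} (A B : SA α 0) : List (ℕ × α × List ℕ) :=
  (A.1 ×ˢ B.1).filterMap fun x =>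
    if x.1.1 = A.2.1 ∧ x.2.1 = B.2.1 ∧ x.1.2.1 = x.2.2.1 then
      some (0, x.1.2.1, x.1.2.2.map f1 ++ x.2.2.2.map f2)
    else none

/-- the intersection automaton of two store automata of the same order -/
noncomputable def inter2 {α : Type} : (k : ℕ) → SA α k → SA α k → SA α k
  | 0, A, B =>
    (interCore A.1 B.1 (interNew0 A B),
     0, interFin A.2.2 B.2.2 (A.2.1 ∈ A.2.2 ∧ B.2.1 ∈ B.2.2))
  | k + 1, A, B =>
    (interCore A.1 B.1
      ((A.1 ×ˢ B.1).filterMap fun x =>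
        if x.1.1 = A.2.1 ∧ x.2.1 = B.2.1 then
          some (0, inter2 k x.1.2.1 x.2.2.1, x.1.2.2.map f1 ++ x.2.2.2.map f2)
        else none),
     0, interFin A.2.2 B.2.2 (A.2.1 ∈ A.2.2 ∧ B.2.1 ∈ B.2.2))

/-- the new transitions at order `k+2`; this is definitionally what appears
in `inter2 (k+1)` -/
noncomputable def interNewS {α : Type} (k : ℕ) (A B : SA α (k + 1)) :
    List (ℕ × SA α k × List ℕ) :=
  (A.1 ×ˢ B.1).filterMap fun x =>
    if x.1.1 = A.2.1 ∧ x.2.1 = B.2.1 then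
      some (0, inter2 k x.1.2.1 x.2.2.1, x.1.2.2.map f1 ++ x.2.2.2.map f2)
    else none

theorem inter2_acc {α : Type} :
    ∀ (k : ℕ) (A B : SA α k) (s : St α k),
      SA.acc (inter2 k A B) s ↔ (SA.acc A s ∧ SA.acc B s) := by
  intro k
  induction k with
  | zero =>
    intro A B s
    show SA.accFrom 0 _ _ s ↔ SA.accFrom 0 _ _ s ∧ SA.accFrom 0 _ _ s
    rw [show SA.init 0 (inter2 0 A B) = 0 from rfl,
        show SA.init 0 A = A.2.1 from rfl, show SA.init 0 B = B.2.1 from rfl,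
        accFrom_zero_iff, accFrom_zero_iff, accFrom_zero_iff,
        show (inter2 0 A B).1 = interCore A.1 B.1 (interNew0 A B) from rfl,
        show (inter2 0 A B).2.2 =
          interFin A.2.2 B.2.2 (A.2.1 ∈ A.2.2 ∧ B.2.1 ∈ B.2.2) from rfl]
    have hnew : ∀ t ∈ interNew0 A B, t.1 = 0 := by
      intro t ht
      obtain ⟨x, _, hx⟩ := List.mem_filterMap.1 ht
      split at hx
      · cases hx; rfl
      · cases hx
    have embA : ∀ (w : List α) (q : ℕ),
        Rec sat0 (interCore A.1 B.1 (interNew0 A B))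
          (interFin A.2.2 B.2.2 (A.2.1 ∈ A.2.2 ∧ B.2.1 ∈ B.2.2)) w (f1 q) ↔
          Rec sat0 A.1 A.2.2 w q :=
      rec_embed (fun q B' L' => interCore_mem_f1 hnew q B' L') (fun q => interFin_mem_f1 q)
    have embB : ∀ (w : List α) (q : ℕ),
        Rec sat0 (interCore A.1 B.1 (interNew0 A B))
          (interFin A.2.2 B.2.2 (A.2.1 ∈ A.2.2 ∧ B.2.1 ∈ B.2.2)) w (f2 q) ↔
          Rec sat0 B.1 B.2.2 w q :=
      rec_embed (fun q B' L' => interCore_mem_f2 hnew q B' L') (fun q => interFin_mem_f2 q)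
    have haux : ∀ w : List α,
        (Rec sat0 (interCore A.1 B.1 (interNew0 A B))
          (interFin A.2.2 B.2.2 (A.2.1 ∈ A.2.2 ∧ B.2.1 ∈ B.2.2)) w 0 ↔
          Rec sat0 A.1 A.2.2 w A.2.1 ∧ Rec sat0 B.1 B.2.2 w B.2.1) := by
      intro w
      cases w with
      | nil => exact interFin_mem_zero
      | cons a w =>
        constructor
        · rintro ⟨Bl, L', hmem, hsat, hrec⟩
          rw [interCore_mem_zero] at hmem
          obtain ⟨x, hx, heq⟩ := List.mem_filterMap.1 hmem
          rw [List.mem_product] at hx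
          split at heq
          case isTrue hcond =>
            obtain ⟨hc1, hc2, hc3⟩ := hcond
            injection heq with heq
            simp only [Prod.mk.injEq] at heq
            obtain ⟨-, hBl, hL'⟩ := heq
            have hrec1 : ∀ q' ∈ x.1.2.2, Rec sat0 A.1 A.2.2 w q' := by
              intro q' hq'
              refine (embA w q').1 (hrec (f1 q') ?_)
              rw [← hL']
              exact List.mem_append_left _ (List.mem_map_of_mem (f := f1) hq')
            have hrec2 : ∀ q' ∈ x.2.2.2, Rec sat0 B.1 B.2.2 w q' := by
              intro q' hq'
              refine (embB w q').1 (hrec (f2 q') ?_)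
              rw [← hL']
              exact List.mem_append_right _ (List.mem_map_of_mem (f := f2) hq')
            constructor
            · refine ⟨x.1.2.1, x.1.2.2, ?_, by rw [hBl]; exact hsat, hrec1⟩
              rw [← hc1]; exact hx.1
            · refine ⟨x.2.2.1, x.2.2.2, ?_, by rw [← hc3, hBl]; exact hsat, hrec2⟩
              rw [← hc2]; exact hx.2
          case isFalse => cases heq
        · rintro ⟨⟨Ba, La, hLa, hsa, hra⟩, ⟨Bb, Lb, hLb, hsb, hrb⟩⟩
          have hsa' : Ba = a := hsa
          have hsb' : Bb = a := hsb
          rw [hsa'] at hLa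
          rw [hsb'] at hLb
          refine ⟨a, La.map f1 ++ Lb.map f2, ?_, rfl, ?_⟩
          · rw [interCore_mem_zero]
            refine List.mem_filterMap.2 ⟨((A.2.1, a, La), (B.2.1, a, Lb)),
              List.mem_product.2 ⟨hLa, hLb⟩, ?_⟩
            rw [if_pos ⟨rfl, rfl, rfl⟩]
          · intro q' hq'
            rcases List.mem_append.1 hq' with h | h
            · obtain ⟨y, hy, rfl⟩ := List.mem_map.1 h
              exact (embA w y).2 (hra y hy)
            · obtain ⟨y, hy, rfl⟩ := List.mem_map.1 h
              exact (embB w y).2 (hrb y hy)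
    exact haux s
  | succ k ih =>
    intro A B s
    show SA.accFrom (k+1) _ _ s ↔ SA.accFrom (k+1) _ _ s ∧ SA.accFrom (k+1) _ _ s
    rw [show SA.init (k+1) (inter2 (k+1) A B) = 0 from rfl,
        show SA.init (k+1) A = A.2.1 from rfl, show SA.init (k+1) B = B.2.1 from rfl,
        accFrom_succ_iff, accFrom_succ_iff, accFrom_succ_iff,
        show (inter2 (k+1) A B).1 = interCore A.1 B.1 (interNewS k A B) from rfl,
        show (inter2 (k+1) A B).2.2 =
          interFin A.2.2 B.2.2 (A.2.1 ∈ A.2.2 ∧ B.2.1 ∈ B.2.2) from rfl]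
    have hnew : ∀ t ∈ interNewS k A B, t.1 = 0 := by
      intro t ht
      obtain ⟨x, _, hx⟩ := List.mem_filterMap.1 ht
      split at hx
      · cases hx; rfl
      · cases hx
    have embA : ∀ (w : List (St α k)) (q : ℕ),
        Rec (satS k) (interCore A.1 B.1 (interNewS k A B))
          (interFin A.2.2 B.2.2 (A.2.1 ∈ A.2.2 ∧ B.2.1 ∈ B.2.2)) w (f1 q) ↔
          Rec (satS k) A.1 A.2.2 w q :=
      rec_embed (fun q B' L' => interCore_mem_f1 hnew q B' L') (fun q => interFin_mem_f1 q)
    have embB : ∀ (w : List (St α k)) (q : ℕ),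
        Rec (satS k) (interCore A.1 B.1 (interNewS k A B))
          (interFin A.2.2 B.2.2 (A.2.1 ∈ A.2.2 ∧ B.2.1 ∈ B.2.2)) w (f2 q) ↔
          Rec (satS k) B.1 B.2.2 w q :=
      rec_embed (fun q B' L' => interCore_mem_f2 hnew q B' L') (fun q => interFin_mem_f2 q)
    constructor
    · rintro ⟨Bl, L', hmem, hsat, hrec⟩
      rw [interCore_mem_zero] at hmem
      obtain ⟨x, hx, heq⟩ := List.mem_filterMap.1 hmem
      rw [List.mem_product] at hx
      split at heq
      case isTrue hcond =>
        obtain ⟨hc1, hc2⟩ := hcond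
        injection heq with heq
        simp only [Prod.mk.injEq] at heq
        obtain ⟨-, hBl, hL'⟩ := heq
        have hsat' : satS k (inter2 k x.1.2.1 x.2.2.1) s.1 := by rw [hBl]; exact hsat
        obtain ⟨hsat1, hsat2⟩ := (ih x.1.2.1 x.2.2.1 s.1).1 hsat'
        have hrec1 : ∀ q' ∈ x.1.2.2, Rec (satS k) A.1 A.2.2 s.2 q' := by
          intro q' hq'
          refine (embA s.2 q').1 (hrec (f1 q') ?_)
          rw [← hL']
          exact List.mem_append_left _ (List.mem_map_of_mem (f := f1) hq')
        have hrec2 : ∀ q' ∈ x.2.2.2, Rec (satS k) B.1 B.2.2 s.2 q' := by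
          intro q' hq'
          refine (embB s.2 q').1 (hrec (f2 q') ?_)
          rw [← hL']
          exact List.mem_append_right _ (List.mem_map_of_mem (f := f2) hq')
        constructor
        · refine ⟨x.1.2.1, x.1.2.2, ?_, hsat1, hrec1⟩
          rw [← hc1]; exact hx.1
        · refine ⟨x.2.2.1, x.2.2.2, ?_, hsat2, hrec2⟩
          rw [← hc2]; exact hx.2
      case isFalse => cases heq
    · rintro ⟨⟨Ba, La, hLa, hsa, hra⟩, ⟨Bb, Lb, hLb, hsb, hrb⟩⟩
      refine ⟨inter2 k Ba Bb, La.map f1 ++ Lb.map f2, ?_,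
        (ih Ba Bb s.1).2 ⟨hsa, hsb⟩, ?_⟩
      · rw [interCore_mem_zero]
        refine List.mem_filterMap.2 ⟨((A.2.1, Ba, La), (B.2.1, Bb, Lb)),
          List.mem_product.2 ⟨hLa, hLb⟩, ?_⟩
        rw [if_pos ⟨rfl, rfl⟩]
      · intro q' hq'
        rcases List.mem_append.1 hq' with h | h
        · obtain ⟨y, hy, rfl⟩ := List.mem_map.1 h
          exact (embA s.2 y).2 (hra y hy)
        · obtain ⟨y, hy, rfl⟩ := List.mem_map.1 h
          exact (embB s.2 y).2 (hrb y hy)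

/-- intersection of a finite list of store automata -/
noncomputable def foldInter {α : Type} (la : List α) (k : ℕ) (Bs : List (SA α k)) : SA α k :=
  Bs.foldr (inter2 k) (allSA la k)

theorem foldInter_acc {α : Type} {la : List α} (hla : ∀ a : α, a ∈ la) (k : ℕ)
    (Bs : List (SA α k)) (s : St α k) :
    SA.acc (foldInter la k Bs) s ↔ ∀ B ∈ Bs, SA.acc B s := by
  induction Bs with
  | nil => simpa [foldInter] using allSA_acc hla k s
  | cons B Bs ih =>
    rw [show foldInter la k (B :: Bs) = inter2 k B (foldInter la k Bs) from rfl,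
        inter2_acc, ih]
    simp

/-! ### Forall₂ helpers -/

theorem forall2_mem_right {β γ : Type*} {R : β → γ → Prop} :
    ∀ {l : List β} {l' : List γ}, List.Forall₂ R l l' → ∀ x ∈ l', ∃ y ∈ l, R y x := by
  intro l l' h
  induction h with
  | nil => simp
  | cons hr _ ih =>
    intro x hx
    rcases List.mem_cons.1 hx with rfl | hx
    · exact ⟨_, List.mem_cons_self, hr⟩
    · obtain ⟨y, hy, hRy⟩ := ih x hx
      exact ⟨y, List.mem_cons_of_mem _ hy, hRy⟩

theorem forall2_mem_left {β γ : Type*} {R : β → γ → Prop} :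
    ∀ {l : List β} {l' : List γ}, List.Forall₂ R l l' → ∀ y ∈ l, ∃ x ∈ l', R y x := by
  intro l l' h
  induction h with
  | nil => simp
  | cons hr _ ih =>
    intro y hy
    rcases List.mem_cons.1 hy with rfl | hy
    · exact ⟨_, List.mem_cons_self, hr⟩
    · obtain ⟨x, hx, hRx⟩ := ih y hy
      exact ⟨x, List.mem_cons_of_mem _ hx, hRx⟩

theorem exists_forall2 {β γ : Type*} {R : β → γ → Prop} :
    ∀ {l' : List γ}, (∀ x ∈ l', ∃ y, R y x) → ∃ l, List.Forall₂ R l l' := by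
  intro l'
  induction l' with
  | nil => exact fun _ => ⟨[], List.Forall₂.nil⟩
  | cons x l' ih =>
    intro h
    obtain ⟨y, hy⟩ := h x (List.mem_cons_self)
    obtain ⟨l, hl⟩ := ih fun x hx => h x (List.mem_cons_of_mem _ hx)
    exact ⟨y :: l, List.Forall₂.cons hy hl⟩

/-! ### Normalization of order-1 automata -/

/-- the "live" states of an order-1 automaton: sources and final states -/
def live {α : Type} (A : SA α 0) : List ℕ := A.1.map (fun t => t.1) ++ A.2.2

/-- normalization: target lists are deduplicated and restricted to live states
(transitions with a dead target accept nothing; they are redirected to the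
fresh dead state `boundOf 0 A`).  At higher orders nothing is done. -/
noncomputable def nrm {α : Type} : (k : ℕ) → SA α k → SA α k
  | 0, A => (A.1.map fun t => (t.1, t.2.1,
      if t.2.2 ⊆ live A then t.2.2.dedup else [boundOf 0 A]), A.2.1, A.2.2)
  | _ + 1, A => A

theorem rec_dead0 {α : Type} {δ : List (ℕ × α × List ℕ)} {F : List ℕ} {q : ℕ}
    (hsrc : ∀ t ∈ δ, t.1 ≠ q) (hfin : q ∉ F) :
    ∀ w : List α, ¬ Rec sat0 δ F w q := by
  intro w
  cases w with
  | nil => exact hfin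
  | cons a w =>
    rintro ⟨B, L, hmem, -, -⟩
    exact hsrc _ hmem rfl

theorem nrm0_fst {α : Type} (A : SA α 0) :
    (nrm 0 A).1 = A.1.map fun t => (t.1, t.2.1,
        if t.2.2 ⊆ live A then t.2.2.dedup else [boundOf 0 A]) := rfl

theorem nrm0_snd {α : Type} (A : SA α 0) : (nrm 0 A).2.1 = A.2.1 := rfl

theorem nrm0_fin {α : Type} (A : SA α 0) : (nrm 0 A).2.2 = A.2.2 := rfl

theorem statesOf_nrm0_sub {α : Type} {A : SA α 0} {q : ℕ}
    (h : q ∈ statesOf 0 (nrm 0 A)) : q ∈ statesOf 0 A ∨ q = boundOf 0 A := by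
  rw [show statesOf 0 (nrm 0 A) = statesL A.2.1 (nrm 0 A).1 A.2.2 from rfl] at h
  rcases List.mem_cons.1 h with rfl | h
  · exact Or.inl statesL_init
  rcases List.mem_append.1 h with h | h
  swap
  · exact Or.inl (statesL_fin h)
  obtain ⟨t', ht', hq⟩ := List.mem_flatMap.1 h
  rw [nrm0_fst] at ht'
  obtain ⟨t, ht, rfl⟩ := List.mem_map.1 ht'
  rcases List.mem_cons.1 hq with rfl | hq
  · exact Or.inl (statesL_src (q0 := A.2.1) (F := A.2.2) (t := t) ht)
  · dsimp only at hq
    split at hq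
    case isTrue hsub => exact Or.inl (statesL_tgt ht (List.mem_dedup.1 hq))
    case isFalse =>
      rcases List.mem_singleton.1 hq with rfl
      exact Or.inr rfl

theorem dead_not_live {α : Type} {A : SA α 0} {q : ℕ} (h : q ∉ live A) :
    ∀ w : List α, ¬ Rec sat0 A.1 A.2.2 w q := by
  apply rec_dead0
  · intro t ht heq
    exact h (List.mem_append_left _ (List.mem_map.2 ⟨t, ht, heq⟩))
  · exact fun hf => h (List.mem_append_right _ hf)

theorem bound_dead_nrm {α : Type} (A : SA α 0) :
    ∀ w : List α, ¬ Rec sat0 (nrm 0 A).1 (nrm 0 A).2.2 w (boundOf 0 A) := by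
  apply rec_dead0
  · intro t ht heq
    rw [nrm0_fst] at ht
    obtain ⟨u, hu, rfl⟩ := List.mem_map.1 ht
    have heq' : u.1 = boundOf 0 A := heq
    have h1 : u.1 ∈ statesOf 0 A := statesL_src hu
    have := lt_boundOf h1
    omega
  · rw [nrm0_fin]
    intro hf
    have h1 : boundOf 0 A ∈ statesOf 0 A := statesL_fin hf
    have := lt_boundOf h1
    omega

/-- normalization preserves the recursive acceptance relation from every state -/
theorem nrm_rec0 {α : Type} (A : SA α 0) :
    ∀ (w : List α) (q : ℕ),
      Rec sat0 (nrm 0 A).1 (nrm 0 A).2.2 w q ↔ Rec sat0 A.1 A.2.2 w q := by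
  intro w
  induction w with
  | nil => intro q; rw [nrm0_fin]; exact Iff.rfl
  | cons a w ih =>
    intro q
    constructor
    · rintro ⟨B, L', hmem, hsat, hrec⟩
      rw [nrm0_fst] at hmem
      obtain ⟨t, ht, heq⟩ := List.mem_map.1 hmem
      simp only [Prod.mk.injEq] at heq
      obtain ⟨h1, h2, h3⟩ := heq
      by_cases hsub : t.2.2 ⊆ live A
      · refine ⟨B, t.2.2, ?_, hsat, ?_⟩
        · rw [← h1, ← h2]; exact ht
        · intro q' hq'
          refine (ih q').1 (hrec q' ?_)
          rw [← h3, if_pos hsub]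
          exact List.mem_dedup.2 hq'
      · exfalso
        have : Rec sat0 (nrm 0 A).1 (nrm 0 A).2.2 w (boundOf 0 A) := by
          apply hrec
          rw [← h3, if_neg hsub]
          exact List.mem_singleton.2 rfl
        exact bound_dead_nrm A w this
    · rintro ⟨B, L, hmem, hsat, hrec⟩
      by_cases hsub : L ⊆ live A
      · refine ⟨B, L.dedup, ?_, hsat, ?_⟩
        · rw [nrm0_fst]
          refine List.mem_map.2 ⟨(q, B, L), hmem, ?_⟩
          show (q, B, if L ⊆ live A then L.dedup else [boundOf 0 A]) = (q, B, L.dedup)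
          rw [if_pos hsub]
        · intro q' hq'
          exact (ih q').2 (hrec q' (List.mem_dedup.1 hq'))
      · exfalso
        have : ∃ q0 ∈ L, q0 ∉ live A := by
          by_contra hc
          push_neg at hc
          exact hsub fun x hx => hc x hx
        obtain ⟨q0, hq0, hq0l⟩ := this
        exact dead_not_live hq0l w (hrec q0 hq0)

/-! ### The complement construction -/

/-- the complement automaton -/
noncomputable def compl {α : Type} (la : List α) : (k : ℕ) → SA α k → SA α k
  | 0, A =>
    (((statesOf 0 (nrm 0 A)).dedup.flatMap fun q => la.flatMap fun a =>
        (((((nrm 0 A).1.filter fun t => t.1 = q ∧ t.2.1 = a).map fun t => t.2.2).sections).map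
          fun pick => (q, a, pick)))
      ++ la.map fun a => (boundOf 0 A + 1, a, ([] : List ℕ)),
     A.2.1,
     (boundOf 0 A + 1) :: (statesOf 0 (nrm 0 A)).dedup.filter fun q => q ∉ (nrm 0 A).2.2)
  | k + 1, A =>
    (((statesOf (k+1) A).dedup.flatMap fun q =>
        (boolVecs (A.1.filter fun t => t.1 = q).length).flatMap fun bv =>
          (((((A.1.filter fun t => t.1 = q).zip bv).filter fun x => x.2).map
              fun x => x.1.2.2).sections).map
            fun pick =>
              (q, foldInter la k (List.zipWith
                    (fun t b => if b then t.2.1 else compl la k t.2.1)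
                    (A.1.filter fun t => t.1 = q) bv),
                pick))
      ++ [(boundOf (k+1) A + 1, allSA la k, ([] : List ℕ))],
     A.2.1,
     (boundOf (k+1) A + 1) :: (statesOf (k+1) A).dedup.filter fun q => q ∉ A.2.2)

theorem compl_init {α : Type} (la : List α) :
    ∀ (k : ℕ) (A : SA α k), SA.init k (compl la k A) = SA.init k A := by
  intro k
  cases k with
  | zero => intro A; rfl
  | succ k => intro A; rfl

/-- the fresh state accepts every word -/
theorem compl_qt0 {α : Type} {la : List α} (hla : ∀ a : α, a ∈ la) (A : SA α 0) :
    ∀ w : List α, Rec sat0 (compl la 0 A).1 (compl la 0 A).2.2 w (boundOf 0 A + 1) := by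
  intro w
  cases w with
  | nil => exact List.mem_cons_self
  | cons a w =>
    refine ⟨a, [], ?_, rfl, by simp⟩
    exact List.mem_append_right _ (List.mem_map.2 ⟨a, hla a, rfl⟩)

theorem compl_qtS {α : Type} {la : List α} (hla : ∀ a : α, a ∈ la) (k : ℕ)
    (A : SA α (k + 1)) :
    ∀ w : List (St α k),
      Rec (satS k) (compl la (k+1) A).1 (compl la (k+1) A).2.2 w (boundOf (k+1) A + 1) := by
  intro w
  cases w with
  | nil => exact List.mem_cons_self
  | cons γ w =>
    refine ⟨allSA la k, [], ?_, allSA_acc hla k γ, by simp⟩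
    exact List.mem_append_right _ (List.mem_singleton.2 rfl)

/-- **Main correctness of the complement construction.** -/
theorem compl_correct {α : Type} {la : List α} (hla : ∀ a : α, a ∈ la) :
    ∀ (k : ℕ) (A : SA α k) (q : ℕ), q ∈ statesOf k (nrm k A) →
      ∀ s : St α k, (SA.accFrom k (compl la k A) q s ↔ ¬ SA.accFrom k A q s) := by
  intro k
  induction k with
  | zero =>
    intro A q hq s
    rw [accFrom_zero_iff, accFrom_zero_iff]; erw [← nrm_rec0 A]
    have key : ∀ (w : List α) (q : ℕ), q ∈ statesOf 0 (nrm 0 A) →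
        (Rec sat0 (compl la 0 A).1 (compl la 0 A).2.2 w q ↔
          ¬ Rec sat0 (nrm 0 A).1 (nrm 0 A).2.2 w q) := by
      intro w
      induction w with
      | nil =>
        intro q hq
        have hlt : q < boundOf 0 A + 1 := by
          rcases statesOf_nrm0_sub hq with h | rfl
          · exact Nat.lt_succ_of_lt (lt_boundOf h)
          · exact Nat.lt_succ_self _
        show q ∈ (boundOf 0 A + 1) :: _ ↔ ¬ (q ∈ (nrm 0 A).2.2)
        constructor
        · intro h
          rcases List.mem_cons.1 h with rfl | h
          · omega
          · have := (List.mem_filter.1 h).2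
            simpa using this
        · intro h
          refine List.mem_cons_of_mem _ (List.mem_filter.2 ⟨List.mem_dedup.2 hq, ?_⟩)
          simpa using h
      | cons a w ih =>
        intro q hq
        have hlt : q < boundOf 0 A + 1 := by
          rcases statesOf_nrm0_sub hq with h | rfl
          · exact Nat.lt_succ_of_lt (lt_boundOf h)
          · exact Nat.lt_succ_self _
        constructor
        · rintro ⟨B, L', hmem, hsat, hrec⟩
          have hBa : B = a := hsat
          subst hBa
          rcases List.mem_append.1 hmem with hmem | hmem
          swap
          · obtain ⟨a', -, heq⟩ := List.mem_map.1 hmem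
            simp only [Prod.mk.injEq] at heq
            omega
          obtain ⟨q1, hq1, hmem⟩ := List.mem_flatMap.1 hmem
          obtain ⟨a1, -, hmem⟩ := List.mem_flatMap.1 hmem
          obtain ⟨pick, hpick, heq⟩ := List.mem_map.1 hmem
          simp only [Prod.mk.injEq] at heq
          obtain ⟨rfl, rfl, rfl⟩ := heq
          rintro ⟨B2, L2, hmem2, hsat2, hrec2⟩
          have hB2a : B2 = a1 := hsat2
          subst hB2a
          have hT : (q1, B2, L2) ∈ (nrm 0 A).1.filter fun t => t.1 = q1 ∧ t.2.1 = B2 := by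
            refine List.mem_filter.2 ⟨hmem2, by simp⟩
          have hL2 : L2 ∈ ((nrm 0 A).1.filter fun t => t.1 = q1 ∧ t.2.1 = B2).map
              fun t => t.2.2 := List.mem_map.2 ⟨(q1, B2, L2), hT, rfl⟩
          have hsec := List.mem_sections.1 hpick
          obtain ⟨y, hy, hyL2⟩ := forall2_mem_right hsec L2 hL2
          have hyS : y ∈ statesOf 0 (nrm 0 A) := statesL_tgt hmem2 hyL2
          exact (ih y hyS).1 (hrec y hy) (hrec2 y hyL2)
        · intro hna
          rw [Rec_cons] at hna
          push_neg at hna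
          have hstep : ∀ L ∈ ((nrm 0 A).1.filter fun t => t.1 = q ∧ t.2.1 = a).map
              (fun t => t.2.2),
              ∃ y, y ∈ L ∧ Rec sat0 (compl la 0 A).1 (compl la 0 A).2.2 w y := by
            intro L hL
            obtain ⟨t, ht, rfl⟩ := List.mem_map.1 hL
            obtain ⟨ht1, ht2⟩ := List.mem_filter.1 ht
            have ht2' : t.1 = q ∧ t.2.1 = a := by simpa using ht2
            have := hna t.2.1 t.2.2 (by
              rw [show (q, t.2.1, t.2.2) = t by rw [← ht2'.1]]
              exact ht1) (by rw [ht2'.2]; rfl)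
            obtain ⟨y, hyL, hy⟩ := this
            have hyS : y ∈ statesOf 0 (nrm 0 A) := statesL_tgt ht1 hyL
            exact ⟨y, hyL, (ih y hyS).2 hy⟩
          obtain ⟨pick, hpick⟩ := exists_forall2 fun L hL => hstep L hL
          refine ⟨a, pick, ?_, rfl, ?_⟩
          · refine List.mem_append_left _ (List.mem_flatMap.2 ⟨q, List.mem_dedup.2 hq,
              List.mem_flatMap.2 ⟨a, hla a, List.mem_map.2 ⟨pick, ?_, rfl⟩⟩⟩)
            exact List.mem_sections.2 (hpick.imp fun y L h => h.1)
          · intro q' hq'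
            obtain ⟨L, -, h⟩ := forall2_mem_left hpick q' hq'
            exact h.2
    exact key s q hq
  | succ k ih =>
    intro A q hq s
    rw [show nrm (k+1) A = A from rfl] at hq
    rw [accFrom_succ_iff, accFrom_succ_iff]
    have key : ∀ (w : List (St α k)) (q : ℕ), q ∈ statesOf (k+1) A →
        (Rec (satS k) (compl la (k+1) A).1 (compl la (k+1) A).2.2 w q ↔
          ¬ Rec (satS k) A.1 A.2.2 w q) := by
      intro w
      induction w with
      | nil =>
        intro q hq
        have hlt : q < boundOf (k+1) A + 1 := Nat.lt_succ_of_lt (lt_boundOf hq)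
        show q ∈ (boundOf (k+1) A + 1) :: _ ↔ ¬ (q ∈ A.2.2)
        constructor
        · intro h
          rcases List.mem_cons.1 h with rfl | h
          · omega
          · have := (List.mem_filter.1 h).2
            simpa using this
        · intro h
          refine List.mem_cons_of_mem _ (List.mem_filter.2 ⟨List.mem_dedup.2 hq, ?_⟩)
          simpa using h
      | cons γ w ih_w =>
        intro q hq
        have hlt : q < boundOf (k+1) A + 1 := Nat.lt_succ_of_lt (lt_boundOf hq)
        constructor
        · rintro ⟨B, L', hmem, hsat, hrec⟩
          rcases List.mem_append.1 hmem with hmem | hmem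
          swap
          · rcases List.mem_singleton.1 hmem with heq
            simp only [Prod.mk.injEq] at heq
            omega
          obtain ⟨q1, hq1, hmem⟩ := List.mem_flatMap.1 hmem
          obtain ⟨bv, hbv, hmem⟩ := List.mem_flatMap.1 hmem
          obtain ⟨pick, hpick, heq⟩ := List.mem_map.1 hmem
          simp only [Prod.mk.injEq] at heq
          obtain ⟨rfl, rfl, rfl⟩ := heq
          have hbvlen : bv.length = (A.1.filter fun t => t.1 = q1).length :=
            mem_boolVecs.1 hbv
          set Ts := A.1.filter fun t => t.1 = q1 with hTs
          rintro ⟨B2, L2, hmem2, hsat2, hrec2⟩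
          have hT : (q1, B2, L2) ∈ Ts := by
            refine List.mem_filter.2 ⟨hmem2, by simp⟩
          obtain ⟨i, hi, hTi⟩ := List.mem_iff_getElem.1 hT
          have hib : i < bv.length := by omega
          by_cases hb : bv[i] = true
          · -- positive transition: use the pick
            have hmemzip : ((q1, B2, L2), true) ∈ (Ts.zip bv).filter fun x => x.2 := by
              refine List.mem_filter.2 ⟨?_, rfl⟩
              refine List.mem_iff_getElem.2 ⟨i, ?_, ?_⟩
              · rw [List.length_zip]; omega
              · rw [List.getElem_zip, hTi, hb]
            have hL2 : L2 ∈ ((Ts.zip bv).filter fun x => x.2).map fun x => x.1.2.2 :=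
              List.mem_map.2 ⟨((q1, B2, L2), true), hmemzip, rfl⟩
            have hsec := List.mem_sections.1 hpick
            obtain ⟨y, hy, hyL2⟩ := forall2_mem_right hsec L2 hL2
            have hyS : y ∈ statesOf (k+1) A := statesL_tgt hmem2 hyL2
            exact (ih_w y hyS).1 (hrec y hy) (hrec2 y hyL2)
          · -- negative transition: the label contains the complement of B2
            have hb' : bv[i] = false := by
              cases hbvi : bv[i]
              · rfl
              · exact absurd hbvi hb
            have hcomp : compl la k B2 ∈ List.zipWith
                (fun t b => if b then t.2.1 else compl la k t.2.1) Ts bv := by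
              refine List.mem_iff_getElem.2 ⟨i, ?_, ?_⟩
              · rw [List.length_zipWith]; omega
              · rw [List.getElem_zipWith, hTi, hb']
                rfl
            have hsat' := (foldInter_acc hla k _ γ).1 hsat _ hcomp
            -- by induction hypothesis on k this contradicts hsat2
            have hinit : SA.init k B2 ∈ statesOf k (nrm k B2) := by
              cases k with
              | zero =>
                have h := statesL_init (q0 := (nrm 0 B2).2.1) (δ := (nrm 0 B2).1)
                  (F := (nrm 0 B2).2.2)
                rw [nrm0_snd] at h
                exact h
              | succ k' =>
                rw [show nrm (k'+1) B2 = B2 from rfl]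
                exact statesL_init
            have := (ih B2 (SA.init k B2) hinit γ)
            rw [show SA.accFrom k (compl la k B2) (SA.init k B2) γ =
                SA.accFrom k (compl la k B2) (SA.init k (compl la k B2)) γ by
              rw [compl_init]] at this
            exact (this.1 hsat') hsat2
        · intro hna
          rw [Rec_cons] at hna
          push_neg at hna
          set Ts := A.1.filter fun t => t.1 = q with hTs
          set bv : List Bool := Ts.map fun t => decide (SA.acc t.2.1 γ) with hbv
          have hbvlen : bv.length = Ts.length := by rw [hbv, List.length_map]
          have hsat : satS k (foldInter la k (List.zipWith
              (fun t b => if b then t.2.1 else compl la k t.2.1) Ts bv)) γ := by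
            show SA.acc _ γ
            rw [foldInter_acc hla]
            intro comp hcomp
            obtain ⟨i, hilen, hieq⟩ := List.mem_iff_getElem.1 hcomp
            rw [List.length_zipWith] at hilen
            have hiT : i < Ts.length := lt_of_lt_of_le hilen (by omega)
            have hib : i < bv.length := by omega
            rw [List.getElem_zipWith] at hieq
            have hbvi : bv[i] = decide (SA.acc Ts[i].2.1 γ) := by
              simp only [hbv, List.getElem_map]
            by_cases hacc : SA.acc Ts[i].2.1 γ
            · rw [hbvi, decide_eq_true hacc] at hieq
              simp only [if_pos] at hieq
              rw [← hieq]
              exact hacc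
            · rw [hbvi, decide_eq_false hacc] at hieq
              simp only [Bool.false_eq_true, if_false] at hieq
              rw [← hieq]
              have hinit : SA.init k Ts[i].2.1 ∈ statesOf k (nrm k Ts[i].2.1) := by
                cases k with
                | zero =>
                  have h := statesL_init (q0 := (nrm 0 Ts[i].2.1).2.1)
                    (δ := (nrm 0 Ts[i].2.1).1) (F := (nrm 0 Ts[i].2.1).2.2)
                  rw [nrm0_snd] at h
                  exact h
                | succ k' =>
                  rw [show nrm (k'+1) Ts[i].2.1 = Ts[i].2.1 from rfl]
                  exact statesL_init
              have := ih Ts[i].2.1 (SA.init k Ts[i].2.1) hinit γ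
              rw [show SA.accFrom k (compl la k Ts[i].2.1) (SA.init k Ts[i].2.1) γ =
                  SA.accFrom k (compl la k Ts[i].2.1)
                    (SA.init k (compl la k Ts[i].2.1)) γ by rw [compl_init]] at this
              exact this.2 hacc
          have hstep : ∀ L ∈ ((Ts.zip bv).filter fun x => x.2).map fun x => x.1.2.2,
              ∃ y, y ∈ L ∧ Rec (satS k) (compl la (k+1) A).1 (compl la (k+1) A).2.2 w y := by
            intro L hL
            obtain ⟨x, hx, rfl⟩ := List.mem_map.1 hL
            obtain ⟨hxz, hxb⟩ := List.mem_filter.1 hx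
            obtain ⟨i, hilen, hieq⟩ := List.mem_iff_getElem.1 hxz
            rw [List.length_zip] at hilen
            have hiT : i < Ts.length := lt_of_lt_of_le hilen (by omega)
            have hib : i < bv.length := by omega
            rw [List.getElem_zip] at hieq
            have hx1 : x.1 = Ts[i] := by rw [← hieq]
            have hx2 : x.2 = bv[i] := by rw [← hieq]
            have hbvi : bv[i] = decide (SA.acc Ts[i].2.1 γ) := by
              simp only [hbv, List.getElem_map]
            have hacc : SA.acc Ts[i].2.1 γ := by
              have : x.2 = true := by simpa using hxb
              rw [hx2, hbvi] at this
              exact of_decide_eq_true this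
            have hmemT : Ts[i] ∈ Ts := List.getElem_mem _
            have hmemT' : Ts[i] ∈ A.1.filter fun t => t.1 = q := by
              rw [← hTs]; exact hmemT
            have hfil := List.mem_filter.1 hmemT'
            have hsrc : Ts[i].1 = q := by simpa using hfil.2
            have := hna Ts[i].2.1 Ts[i].2.2 (by
              rw [show (q, Ts[i].2.1, Ts[i].2.2) = Ts[i] by rw [← hsrc]]
              exact hfil.1) hacc
            obtain ⟨y, hyL, hy⟩ := this
            have hyS : y ∈ statesOf (k+1) A := statesL_tgt hfil.1 hyL
            refine ⟨y, by rw [hx1]; exact hyL, (ih_w y hyS).2 hy⟩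
          obtain ⟨pick, hpick⟩ := exists_forall2 fun L hL => hstep L hL
          refine ⟨_, pick, ?_, hsat, ?_⟩
          · refine List.mem_append_left _ (List.mem_flatMap.2 ⟨q, List.mem_dedup.2 hq, ?_⟩)
            refine List.mem_flatMap.2 ⟨bv, mem_boolVecs.2 hbvlen, List.mem_map.2
              ⟨pick, ?_, rfl⟩⟩
            exact List.mem_sections.2 (hpick.imp fun y L h => h.1)
          · intro q' hq'
            obtain ⟨L, -, h⟩ := forall2_mem_left hpick q' hq'
            exact h.2
    exact key (s.1 :: s.2) q hq

/-- from states outside the (normalized) state list, nothing is accepted -/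
theorem not_accFrom_outside {α : Type} :
    ∀ (k : ℕ) (A : SA α k) (q : ℕ), q ∉ statesOf k (nrm k A) →
      ∀ s : St α k, ¬ SA.accFrom k A q s := by
  intro k
  cases k with
  | zero =>
    intro A q hq s
    rw [accFrom_zero_iff]
    have key : ∀ w : List α, ¬ Rec sat0 A.1 A.2.2 w q := by
      apply rec_dead0
      · intro t ht heq
        apply hq
        rw [show statesOf 0 (nrm 0 A) =
            statesL (nrm 0 A).2.1 (nrm 0 A).1 (nrm 0 A).2.2 from rfl]
        have : (t.1, t.2.1, if t.2.2 ⊆ live A then t.2.2.dedup else [boundOf 0 A])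
            ∈ (nrm 0 A).1 := by
          rw [nrm0_fst]
          exact List.mem_map.2 ⟨t, ht, rfl⟩
        have h' := statesL_src (q0 := (nrm 0 A).2.1) (F := (nrm 0 A).2.2) this
        rw [heq] at h'
        exact h'
      · intro hf
        apply hq
        rw [show statesOf 0 (nrm 0 A) =
            statesL (nrm 0 A).2.1 (nrm 0 A).1 (nrm 0 A).2.2 from rfl, nrm0_fin]
        exact statesL_fin hf
    exact key s
  | succ k =>
    intro A q hq s
    rw [accFrom_succ_iff]
    rintro ⟨B, L, hmem, -, -⟩
    apply hq
    rw [show nrm (k+1) A = A from rfl]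
    exact statesL_src (t := (q, B, L)) hmem

/-! ### Assembly: complementation of multi-automata -/

theorem compl_qt_acc {α : Type} {la : List α} (hla : ∀ a : α, a ∈ la) :
    ∀ (k : ℕ) (A : SA α k) (s : St α k),
      SA.accFrom k (compl la k A) (boundOf k A + 1) s := by
  intro k
  cases k with
  | zero =>
    intro A s
    rw [accFrom_zero_iff]
    exact compl_qt0 hla A s
  | succ k =>
    intro A s
    rw [accFrom_succ_iff]
    exact compl_qtS hla k A (s.1 :: s.2)

theorem MSA_Lang_some {α P : Type} {k : ℕ} {M : MSA α P k} {p : P} {s : St α k} :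
    (p, some s) ∈ M.Lang ↔ SA.accFrom k M.core (M.inits p) s := by
  simp [MSA.Lang]

theorem MSA_Lang_none {α P : Type} {k : ℕ} {M : MSA α P k} {p : P} :
    ((p, none) : AConf P α k) ∈ M.Lang ↔ p ∈ M.nabla := by
  simp [MSA.Lang]

/-- the complement multi-automaton -/
noncomputable def MSA.compl {α P : Type} {k : ℕ} (la : List α) (M : MSA α P k) :
    MSA α P k where
  core := HOPDS.compl la k M.core
  inits := fun p => if M.inits p ∈ statesOf k (nrm k M.core) then M.inits p
    else boundOf k M.core + 1
  nabla := M.nablaᶜ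

theorem MSA_compl_Lang {α P : Type} {k : ℕ} {la : List α} (hla : ∀ a : α, a ∈ la)
    (M : MSA α P k) : (MSA.compl la M).Lang = M.Langᶜ := by
  ext c
  obtain ⟨p, o⟩ := c
  cases o with
  | none =>
    rw [Set.mem_compl_iff, MSA_Lang_none, MSA_Lang_none]
    exact Iff.rfl
  | some s =>
    rw [Set.mem_compl_iff, MSA_Lang_some, MSA_Lang_some]
    show SA.accFrom k (compl la k M.core) _ s ↔ _
    simp only [MSA.compl]
    by_cases h : M.inits p ∈ statesOf k (nrm k M.core)
    · rw [if_pos h]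
      exact compl_correct hla k M.core (M.inits p) h s
    · rw [if_neg h]
      constructor
      · intro _
        exact not_accFrom_outside k M.core (M.inits p) h s
      · intro _
        exact compl_qt_acc hla k M.core s

/-! ### Size bookkeeping helpers -/

theorem size0_eq {α : Type} (A : SA α 0) :
    SA.size 0 A = A.1.length + A.2.2.length + 1 := rfl

theorem sizeS_eq {α : Type} (k : ℕ) (A : SA α (k+1)) :
    SA.size (k+1) A =
      (A.1.map fun t => SA.size k t.2.1 + t.2.2.length + 1).sum + A.2.2.length + 1 := rfl

theorem size_pos {α : Type} (k : ℕ) (A : SA α k) : 1 ≤ SA.size k A := by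
  cases k with
  | zero => rw [size0_eq]; omega
  | succ k => rw [sizeS_eq]; omega

theorem sum_map_flatMap {β γ : Type*} (l : List β) (f : β → List γ) (c : γ → ℕ) :
    ((l.flatMap f).map c).sum = (l.map fun x => ((f x).map c).sum).sum := by
  induction l with
  | nil => simp
  | cons x l ih => simp [List.flatMap_cons, ih]

theorem sum_map_le_of_le {β : Type*} {l : List β} {c : β → ℕ} {m : ℕ}
    (h : ∀ x ∈ l, c x ≤ m) : (l.map c).sum ≤ l.length * m := by
  induction l with
  | nil => simp
  | cons x l ih =>
    simp only [List.map_cons, List.sum_cons, List.length_cons]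
    have := ih fun x hx => h x (List.mem_cons_of_mem _ hx)
    have := h x (List.mem_cons_self)
    calc c x + (l.map c).sum ≤ m + l.length * m := by omega
      _ = (l.length + 1) * m := by ring

theorem length_le_sum_map {β : Type*} {l : List β} {c : β → ℕ}
    (h : ∀ x ∈ l, 1 ≤ c x) : l.length ≤ (l.map c).sum := by
  induction l with
  | nil => simp
  | cons x l ih =>
    simp only [List.map_cons, List.sum_cons, List.length_cons]
    have := ih fun x hx => h x (List.mem_cons_of_mem _ hx)
    have := h x (List.mem_cons_self)
    omega

theorem le_sum_map_of_mem {β : Type*} {l : List β} {c : β → ℕ} {x : β}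
    (h : x ∈ l) : c x ≤ (l.map c).sum := by
  induction l with
  | nil => cases h
  | cons y l ih =>
    simp only [List.map_cons, List.sum_cons]
    rcases List.mem_cons.1 h with rfl | h
    · omega
    · have := ih h; omega

theorem prod_le_two_pow_sum (l : List ℕ) : l.prod ≤ 2 ^ l.sum := by
  induction l with
  | nil => simp
  | cons x l ih =>
    simp only [List.prod_cons, List.sum_cons, pow_add]
    exact Nat.mul_le_mul (Nat.lt_two_pow_self (n := x)).le ih

theorem length_sections {β : Type*} : ∀ L : List (List β),
    (List.sections L).length = (L.map List.length).prod := by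
  intro L
  induction L with
  | nil => simp [List.sections]
  | cons l L ih =>
    simp only [List.sections, List.length_flatMap, List.map_cons, List.prod_cons]
    rw [show (List.map (fun s => (l.map fun a => a :: s).length) L.sections)
        = List.map (fun _ => l.length) L.sections by
      apply List.map_congr_left; intro s _; simp]
    rw [show (List.map (fun _ => l.length) L.sections).sum
        = L.sections.length * l.length from ?_]
    · rw [ih]; ring
    · induction L.sections with
      | nil => simp
      | cons s ss ihs => simp [ihs]; ring

theorem length_boolVecs (n : ℕ) : (boolVecs n).length = 2 ^ n := by
  induction n with
  | zero => rfl
  | succ n ih =>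
    simp only [boolVecs, List.length_flatMap]
    rw [show List.map (fun v => [true :: v, false :: v].length) (boolVecs n)
        = List.map (fun _ => 2) (boolVecs n) by
      apply List.map_congr_left; intro v _; simp]
    rw [show (List.map (fun _ => 2) (boolVecs n)).sum = (boolVecs n).length * 2 from ?_]
    · rw [ih]; ring
    · induction boolVecs n with
      | nil => simp
      | cons v vs ihs => simp [ihs]; ring

theorem sum_map_mul_left {γ : Type*} (a : ℕ) (g : γ → ℕ) (l : List γ) :
    (l.map fun y => a * g y).sum = a * (l.map g).sum := by
  induction l with
  | nil => simp
  | cons y l ih => simp [ih, Nat.mul_add]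

theorem sum_map_product {β γ : Type*} (l : List β) (r : List γ) (f : β → ℕ) (g : γ → ℕ) :
    ((l ×ˢ r).map fun x => f x.1 * g x.2).sum = (l.map f).sum * (r.map g).sum := by
  induction l with
  | nil => simp [List.product]
  | cons x l ih =>
    rw [show ((x :: l) ×ˢ r) = (r.map fun y => (x, y)) ++ (l ×ˢ r) from rfl]
    rw [List.map_append, List.sum_append, ih, List.map_cons, List.sum_cons,
      Nat.add_mul, List.map_map]
    congr 1
    rw [show (List.map ((fun p => f p.1 * g p.2) ∘ fun y => (x, y)) r)
        = List.map (fun y => f x * g y) r from rfl]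
    exact sum_map_mul_left (f x) g r

theorem sum_map_filterMap_le {β γ : Type*} {l : List β} {g : β → Option γ}
    {c : γ → ℕ} {c' : β → ℕ} (h : ∀ x ∈ l, ∀ y, g x = some y → c y ≤ c' x) :
    ((l.filterMap g).map c).sum ≤ (l.map c').sum := by
  induction l with
  | nil => simp
  | cons x l ih =>
    have ihl := ih fun x hx => h x (List.mem_cons_of_mem _ hx)
    simp only [List.filterMap_cons]
    cases hx : g x with
    | none => simp only [List.map_cons, List.sum_cons]; omega
    | some y =>
      simp only [List.map_cons, List.sum_cons]
      have := h x (List.mem_cons_self) y hx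
      omega

theorem prod_map_filter_le {β : Type*} {l : List β} {p : β → Bool} {f g : β → ℕ}
    (hf : ∀ x ∈ l, f x ≤ g x) (hg : ∀ x ∈ l, 1 ≤ g x) :
    ((l.filter p).map f).prod ≤ (l.map g).prod := by
  induction l with
  | nil => simp
  | cons x l ih =>
    have ihl := ih (fun x hx => hf x (List.mem_cons_of_mem _ hx))
      (fun x hx => hg x (List.mem_cons_of_mem _ hx))
    have hfx := hf x (List.mem_cons_self)
    have hgx := hg x (List.mem_cons_self)
    simp only [List.filter_cons]
    split
    · simp only [List.map_cons, List.prod_cons]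
      exact Nat.mul_le_mul hfx ihl
    · simp only [List.map_cons, List.prod_cons]
      calc ((l.filter p).map f).prod ≤ (l.map g).prod := ihl
        _ ≤ g x * (l.map g).prod := Nat.le_mul_of_pos_left _ hgx

theorem seven_k_le (k : ℕ) : 7 * k + 8 ≤ 2 ^ (3 * k + 3) := by
  induction k with
  | zero => norm_num
  | succ k ih =>
    have : 2 ^ (3 * k + 3) ≤ 2 ^ (3 * (k+1) + 3) := Nat.pow_le_pow_right (by norm_num) (by omega)
    have h2 : 7 * (k+1) + 8 ≤ 2 * (7 * k + 8) := by omega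
    calc 7 * (k+1) + 8 ≤ 2 * (7 * k + 8) := h2
      _ ≤ 2 * 2 ^ (3 * k + 3) := by omega
      _ = 2 ^ (3 * k + 4) := by rw [pow_succ]; ring
      _ ≤ 2 ^ (3 * (k+1) + 3) := Nat.pow_le_pow_right (by norm_num) (by omega)

/-! ### Sizes of the building blocks -/

theorem size_allSA {α : Type} (la : List α) :
    ∀ k : ℕ, SA.size k (allSA la k) = la.length + 3 * k + 2 := by
  intro k
  induction k with
  | zero => erw [show allSA la 0 = (la.map fun a => (0, a, ([] : List ℕ)), 0, [0]) from rfl,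
      size0_eq]; simp
  | succ k ih =>
    erw [show allSA la (k+1) = ([(0, allSA la k, ([] : List ℕ))], 0, [0]) from rfl,
      sizeS_eq]
    simp [ih]
    omega

theorem size_inter2 {α : Type} :
    ∀ (k : ℕ) (A B : SA α k),
      SA.size k (inter2 k A B) ≤ (7 * k + 8) * SA.size k A * SA.size k B := by
  intro k
  induction k with
  | zero =>
    intro A B
    rw [size0_eq, size0_eq, size0_eq,
      show (inter2 0 A B).1 = interCore A.1 B.1 (interNew0 A B) from rfl,
      show (inter2 0 A B).2.2 =
        interFin A.2.2 B.2.2 (A.2.1 ∈ A.2.2 ∧ B.2.1 ∈ B.2.2) from rfl]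
    have h1 : (interCore A.1 B.1 (interNew0 A B)).length ≤
        A.1.length * B.1.length + A.1.length + B.1.length := by
      rw [interCore, List.length_append, List.length_append,
        List.length_map, List.length_map]
      have : (interNew0 A B).length ≤ A.1.length * B.1.length := by
        rw [interNew0]
        calc (List.filterMap _ (A.1 ×ˢ B.1)).length ≤ (A.1 ×ˢ B.1).length :=
              List.length_filterMap_le _ _
          _ = A.1.length * B.1.length := List.length_product _ _
      omega
    have h2 : (interFin A.2.2 B.2.2 (A.2.1 ∈ A.2.2 ∧ B.2.1 ∈ B.2.2)).length ≤
        1 + A.2.2.length + B.2.2.length := by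
      rw [interFin, List.length_append, List.length_append,
        List.length_map, List.length_map]
      split <;> simp
    nlinarith [A.1.length, B.1.length, A.2.2.length, B.2.2.length]
  | succ k ih =>
    intro A B
    rw [sizeS_eq, sizeS_eq, sizeS_eq,
      show (inter2 (k+1) A B).1 = interCore A.1 B.1 (interNewS k A B) from rfl,
      show (inter2 (k+1) A B).2.2 =
        interFin A.2.2 B.2.2 (A.2.1 ∈ A.2.2 ∧ B.2.1 ∈ B.2.2) from rfl]
    set cA := fun t : ℕ × SA α k × List ℕ => SA.size k t.2.1 + t.2.2.length + 1 with hcA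
    have hAsum : (A.1.map cA).sum + A.2.2.length + 1 = SA.size (k+1) A := (sizeS_eq k A).symm
    have hBsum : (B.1.map cA).sum + B.2.2.length + 1 = SA.size (k+1) B := (sizeS_eq k B).symm
    -- cost of the renamed copies
    have hren : ∀ (δ : List (ℕ × SA α k × List ℕ)) (f : ℕ → ℕ),
        ((δ.map fun t => (f t.1, t.2.1, t.2.2.map f)).map cA).sum = (δ.map cA).sum := by
      intro δ f
      rw [List.map_map]
      apply congrArg
      apply List.map_congr_left
      intro t _
      simp [hcA]
    -- cost of the new transitions
    have hnew : ((interNewS k A B).map cA).sum ≤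
        (7 * k + 9) * ((A.1.map cA).sum * (B.1.map cA).sum) := by
      rw [interNewS]
      calc ((List.filterMap _ (A.1 ×ˢ B.1)).map cA).sum
          ≤ ((A.1 ×ˢ B.1).map fun x => (7 * k + 9) * (cA x.1 * cA x.2)).sum := by
            apply sum_map_filterMap_le
            intro x _ y hy
            split at hy
            · cases hy
              have hIH := ih x.1.2.1 x.2.2.1
              have e1 : 1 ≤ SA.size k x.1.2.1 := size_pos _ _
              have e2 : 1 ≤ SA.size k x.2.2.1 := size_pos _ _
              simp only [hcA, List.length_append, List.length_map]
              set s1 := SA.size k x.1.2.1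
              set s2 := SA.size k x.2.2.1
              set l1 := x.1.2.2.length
              set l2 := x.2.2.2.length
              have hX1 : l1 + l2 + 1 ≤ (s1 + l1 + 1) * (s2 + l2 + 1) := by nlinarith
              have hX2 : s1 * s2 ≤ (s1 + l1 + 1) * (s2 + l2 + 1) := by nlinarith
              calc SA.size k (inter2 k x.1.2.1 x.2.2.1) + (l1 + l2) + 1
                  ≤ (7 * k + 8) * s1 * s2 + (l1 + l2 + 1) := by omega
                _ ≤ (7 * k + 8) * ((s1 + l1 + 1) * (s2 + l2 + 1))
                    + (s1 + l1 + 1) * (s2 + l2 + 1) := by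
                    have := Nat.mul_le_mul_left (7 * k + 8) hX2
                    rw [Nat.mul_assoc] at *
                    omega
                _ = (7 * k + 9) * ((s1 + l1 + 1) * (s2 + l2 + 1)) := by ring
            · cases hy
          _ = (7 * k + 9) * ((A.1.map cA).sum * (B.1.map cA).sum) := by
            rw [sum_map_mul_left (7 * k + 9) (fun x => cA x.1 * cA x.2) (A.1 ×ˢ B.1),
              sum_map_product]
    have hFin : (interFin A.2.2 B.2.2 (A.2.1 ∈ A.2.2 ∧ B.2.1 ∈ B.2.2)).length ≤
        1 + A.2.2.length + B.2.2.length := by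
      rw [interFin, List.length_append, List.length_append,
        List.length_map, List.length_map]
      split <;> simp
    have hsplit : ((interCore A.1 B.1 (interNewS k A B)).map cA).sum =
        ((interNewS k A B).map cA).sum + (A.1.map cA).sum + (B.1.map cA).sum := by
      rw [interCore, List.map_append, List.map_append, List.sum_append, List.sum_append,
        hren A.1 f1, hren B.1 f2]
    rw [hsplit]
    set aS := (A.1.map cA).sum
    set bS := (B.1.map cA).sum
    set aF := A.2.2.length
    set bF := B.2.2.length
    set X := (aS + aF + 1) * (bS + bF + 1) with hX
    have hX1 : 1 ≤ X := by
      rw [hX]; exact Nat.one_le_iff_ne_zero.2 (Nat.mul_ne_zero (by omega) (by omega))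
    have hXa : aS * bS ≤ X := by
      rw [hX]; exact Nat.mul_le_mul (by omega) (by omega)
    have hXs : aS ≤ X := by
      rw [hX]
      exact le_trans (by omega : aS ≤ aS + aF + 1)
        (Nat.le_mul_of_pos_right _ (by omega))
    have hXb : bS ≤ X := by
      rw [hX]
      calc bS ≤ 1 * (bS + bF + 1) := by omega
        _ ≤ (aS + aF + 1) * (bS + bF + 1) := Nat.mul_le_mul_right _ (by omega)
    have hXf : aF + bF + 1 ≤ X := by
      rw [hX]
      have h1 : (aF + 1) * (bF + 1) = aF * bF + (aF + bF + 1) := by ring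
      have h2 : (aF + 1) * (bF + 1) ≤ (aS + aF + 1) * (bS + bF + 1) :=
        Nat.mul_le_mul (by omega) (by omega)
      omega
    have hnew' : ((interNewS k A B).map cA).sum ≤ (7 * k + 9) * X :=
      le_trans hnew (Nat.mul_le_mul_left _ hXa)
    calc ((interNewS k A B).map cA).sum + aS + bS +
          (interFin A.2.2 B.2.2 (A.2.1 ∈ A.2.2 ∧ B.2.1 ∈ B.2.2)).length + 1
        ≤ (7 * k + 9) * X + X + X + (1 + aF + bF) + 1 := by omega
      _ ≤ (7 * k + 9) * X + X + X + X + X := by omega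
      _ ≤ (7 * k + 13) * X := by ring_nf; omega
      _ ≤ (7 * (k + 1) + 8) * ((aS + aF + 1) * (bS + bF + 1)) := by
          rw [← hX]; exact Nat.mul_le_mul_right _ (by omega)
      _ = (7 * (k + 1) + 8) * (aS + aF + 1) * (bS + bF + 1) := by ring

theorem size_foldInter {α : Type} (la : List α) (k : ℕ) :
    ∀ Bs : List (SA α k),
      SA.size k (foldInter la k Bs) ≤
        (la.length + 3 * k + 2) * (7 * k + 8) ^ Bs.length * (Bs.map (SA.size k)).prod := by
  intro Bs
  induction Bs with
  | nil =>
    rw [show foldInter la k [] = allSA la k from rfl, size_allSA]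
    simp
  | cons B Bs ih =>
    rw [show foldInter la k (B :: Bs) = inter2 k B (foldInter la k Bs) from rfl]
    calc SA.size k (inter2 k B (foldInter la k Bs))
        ≤ (7 * k + 8) * SA.size k B * SA.size k (foldInter la k Bs) := size_inter2 k _ _
      _ ≤ (7 * k + 8) * SA.size k B *
          ((la.length + 3 * k + 2) * (7 * k + 8) ^ Bs.length * (Bs.map (SA.size k)).prod) :=
          Nat.mul_le_mul_left _ ih
      _ = (la.length + 3 * k + 2) * (7 * k + 8) ^ (B :: Bs).length *
          ((B :: Bs).map (SA.size k)).prod := by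
          simp only [List.length_cons, List.map_cons, List.prod_cons, pow_succ]
          ring

/-- the exponent used in the size bound for the complement construction -/
def cExp : ℕ → ℕ
  | 0 => 4
  | k + 1 => cExp k + 2 * k + 12

theorem prod_map_le_pow {β : Type*} {l : List β} {c : β → ℕ} {m : ℕ}
    (h : ∀ x ∈ l, c x ≤ m) : (l.map c).prod ≤ m ^ l.length := by
  induction l with
  | nil => simp
  | cons x l ih =>
    simp only [List.map_cons, List.prod_cons, List.length_cons, pow_succ]
    have h1 := h x (List.mem_cons_self)
    have h2 := ih fun x hx => h x (List.mem_cons_of_mem _ hx)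
    calc c x * (l.map c).prod ≤ m * m ^ l.length := Nat.mul_le_mul h1 h2
      _ = m ^ l.length * m := by ring

theorem sum_map_filter_le {β : Type*} {l : List β} {p : β → Bool} {c : β → ℕ} :
    ((l.filter p).map c).sum ≤ (l.map c).sum := by
  induction l with
  | nil => simp
  | cons x l ih =>
    simp only [List.filter_cons]
    split
    · simp only [List.map_cons, List.sum_cons]; omega
    · simp only [List.map_cons, List.sum_cons]; omega

theorem statesL_length {Lab : Type} (q0 : ℕ) (δ : List (ℕ × Lab × List ℕ)) (F : List ℕ) :
    (statesL q0 δ F).length = 1 + (δ.map fun t => t.2.2.length + 1).sum + F.length := by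
  simp only [statesL, List.length_cons, List.length_append, List.length_flatMap]
  omega

theorem statesOf_succ_length {α : Type} (k : ℕ) (A : SA α (k+1)) :
    (statesOf (k+1) A).length ≤ SA.size (k+1) A := by
  rw [show statesOf (k+1) A = statesL A.2.1 A.1 A.2.2 from rfl, statesL_length,
    sizeS_eq]
  have : (A.1.map fun t => t.2.2.length + 1).sum ≤
      (A.1.map fun t => SA.size k t.2.1 + t.2.2.length + 1).sum := by
    apply List.sum_le_sum
    intro t _
    have := size_pos k t.2.1
    omega
  omega

theorem tgtsum_succ_le {α : Type} (k : ℕ) (A : SA α (k+1)) :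
    (A.1.map fun t => t.2.2.length + 1).sum ≤ SA.size (k+1) A := by
  rw [sizeS_eq]
  have : (A.1.map fun t => t.2.2.length + 1).sum ≤
      (A.1.map fun t => SA.size k t.2.1 + t.2.2.length + 1).sum := by
    apply List.sum_le_sum
    intro t _
    have := size_pos k t.2.1
    omega
  omega

theorem length_fst_succ_le {α : Type} (k : ℕ) (A : SA α (k+1)) :
    A.1.length ≤ SA.size (k+1) A := by
  rw [sizeS_eq]
  have : A.1.length ≤ (A.1.map fun t => SA.size k t.2.1 + t.2.2.length + 1).sum := by
    apply length_le_sum_map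
    intro t _
    have := size_pos k t.2.1
    omega
  omega

theorem label_size_le {α : Type} {k : ℕ} {A : SA α (k+1)} {t : ℕ × SA α k × List ℕ}
    (ht : t ∈ A.1) : SA.size k t.2.1 ≤ SA.size (k+1) A := by
  rw [sizeS_eq]
  have h2 : SA.size k t.2.1 + t.2.2.length + 1 ≤
      (A.1.map fun t : ℕ × SA α k × List ℕ =>
        SA.size k t.2.1 + t.2.2.length + 1).sum :=
    le_sum_map_of_mem (c := fun t : ℕ × SA α k × List ℕ =>
      SA.size k t.2.1 + t.2.2.length + 1) ht
  omega

theorem nine_k_le (k : ℕ) : 9 * k + 12 ≤ 3 ^ (2 * k + 11) := by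
  induction k with
  | zero =>
    calc 9 * 0 + 12 = 12 := by norm_num
      _ ≤ 3 ^ 3 := by norm_num
      _ ≤ 3 ^ (2 * 0 + 11) := Nat.pow_le_pow_right (by norm_num) (by omega)
  | succ k ih =>
    calc 9 * (k+1) + 12 ≤ 3 * (9 * k + 12) := by omega
      _ ≤ 3 * 3 ^ (2 * k + 11) := by omega
      _ = 3 ^ (2 * k + 12) := by rw [pow_succ]; ring
      _ ≤ 3 ^ (2 * (k+1) + 11) := Nat.pow_le_pow_right (by norm_num) (by omega)

theorem cExp_pos (k : ℕ) : 1 ≤ cExp k := by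
  induction k with
  | zero => norm_num [cExp]
  | succ k ih => rw [cExp]; omega

/-- the total sum of target-list lengths (plus one each) of the normalized
order-1 automaton is quadratically bounded -/
theorem nrm0_tgtsum {α : Type} (A : SA α 0) :
    ((nrm 0 A).1.map fun t => t.2.2.length + 1).sum ≤
      A.1.length * (A.1.length + A.2.2.length + 2) := by
  rw [nrm0_fst, List.map_map]
  have hlive : (live A).length = A.1.length + A.2.2.length := by
    rw [live, List.length_append, List.length_map]
  refine sum_map_le_of_le ?_
  intro t _
  show (if t.2.2 ⊆ live A then t.2.2.dedup else [boundOf 0 A]).length + 1 ≤ _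
  split
  case isTrue hsub =>
    have hd : t.2.2.dedup ⊆ live A := fun x hx => hsub (List.mem_dedup.1 hx)
    have := (List.subperm_of_subset (List.nodup_dedup _) hd).length_le
    omega
  case isFalse =>
    simp only [List.length_singleton]
    omega

theorem statesOf_nrm0_length {α : Type} (A : SA α 0) :
    (statesOf 0 (nrm 0 A)).length ≤ (SA.size 0 A + 1) ^ 2 := by
  rw [show statesOf 0 (nrm 0 A) = statesL (nrm 0 A).2.1 (nrm 0 A).1 (nrm 0 A).2.2
      from rfl, statesL_length, nrm0_fin, size0_eq]
  have h1 := nrm0_tgtsum A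
  set a := A.1.length
  set f := A.2.2.length
  have h2 : ((nrm 0 A).1.map fun t => t.2.2.length + 1).sum ≤ a * (a + f + 2) := h1
  nlinarith [a, f]

set_option maxHeartbeats 1000000 in
theorem compl_size {α : Type} (la : List α) :
    ∀ (k : ℕ) (A : SA α k),
      SA.size k (compl la k A) ≤ 2 ^ ((SA.size k A + la.length + 2) ^ (cExp k)) := by
  intro k
  induction k with
  | zero =>
    intro A
    set n := SA.size 0 A + la.length + 2 with hn
    have hn3 : 3 ≤ n := by have := size_pos 0 A; omega
    erw [show compl la 0 A =
      (((statesOf 0 (nrm 0 A)).dedup.flatMap fun q => la.flatMap fun a =>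
          (((((nrm 0 A).1.filter fun t => t.1 = q ∧ t.2.1 = a).map fun t =>
            t.2.2).sections).map fun pick => (q, a, pick)))
        ++ la.map fun a => (boundOf 0 A + 1, a, ([] : List ℕ)),
       A.2.1,
       (boundOf 0 A + 1) :: (statesOf 0 (nrm 0 A)).dedup.filter fun q =>
         q ∉ (nrm 0 A).2.2) from rfl, size0_eq]
    -- the number of sections is at most 2 ^ (n^2)
    have hsec : ∀ (q : ℕ) (a : α),
        (((((nrm 0 A).1.filter fun t => t.1 = q ∧ t.2.1 = a).map fun t =>
          t.2.2).sections).map fun pick => (q, a, pick)).length ≤ 2 ^ (n ^ 2) := by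
      intro q a
      rw [List.length_map, length_sections, List.map_map]
      calc ((((nrm 0 A).1.filter fun t => t.1 = q ∧ t.2.1 = a).map
            (List.length ∘ fun t => t.2.2)).prod)
          ≤ ((nrm 0 A).1.map fun t => t.2.2.length + 1).prod := by
            apply prod_map_filter_le
            · intro t _; exact Nat.le_succ _
            · intro t _; omega
        _ ≤ 2 ^ (((nrm 0 A).1.map fun t => t.2.2.length + 1).sum) :=
            prod_le_two_pow_sum _
        _ ≤ 2 ^ (A.1.length * (A.1.length + A.2.2.length + 2)) :=
            Nat.pow_le_pow_right (by norm_num) (nrm0_tgtsum A)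
        _ ≤ 2 ^ (n ^ 2) := by
            apply Nat.pow_le_pow_right (by norm_num)
            have h0 : A.1.length + A.2.2.length + 1 = SA.size 0 A := (size0_eq A).symm
            nlinarith [A.1.length, A.2.2.length, la.length]
    have hQ : (statesOf 0 (nrm 0 A)).dedup.length ≤ (SA.size 0 A + 1) ^ 2 :=
      le_trans (List.Sublist.length_le (List.dedup_sublist _)) (statesOf_nrm0_length A)
    have hQn : (statesOf 0 (nrm 0 A)).dedup.length ≤ n ^ 2 := by
      apply le_trans hQ
      apply Nat.pow_le_pow_left
      omega
    -- length of the main transition block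
    have hT1 : ((statesOf 0 (nrm 0 A)).dedup.flatMap fun q => la.flatMap fun a =>
        (((((nrm 0 A).1.filter fun t => t.1 = q ∧ t.2.1 = a).map fun t =>
          t.2.2).sections).map fun pick => (q, a, pick))).length ≤
        n ^ 2 * (la.length * 2 ^ (n ^ 2)) := by
      rw [List.length_flatMap]
      apply le_trans (sum_map_le_of_le (m := la.length * 2 ^ (n ^ 2)) ?_)
      · exact Nat.mul_le_mul_right _ hQn
      · intro q _
        show (la.flatMap fun a => _).length ≤ _
        rw [List.length_flatMap]
        apply le_trans (sum_map_le_of_le (m := 2 ^ (n ^ 2)) ?_) (le_of_eq rfl)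
        intro a _
        exact hsec q a
    have hl_n : la.length ≤ n := by omega
    have hx2x : ∀ x : ℕ, x ≤ 2 ^ x := fun x => (Nat.lt_two_pow_self (n := x)).le
    -- total
    have htot : n ^ 2 * (la.length * 2 ^ (n ^ 2)) + la.length +
        (1 + (statesOf 0 (nrm 0 A)).dedup.length) + 1 ≤ 2 ^ (n ^ 2 + 3 * n + 3) := by
      have e1 : n ^ 2 ≤ 2 ^ (2 * n) := by
        calc n ^ 2 ≤ (2 ^ n) ^ 2 := Nat.pow_le_pow_left (hx2x n) 2
          _ = 2 ^ (2 * n) := by rw [← pow_mul]; ring_nf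
      have e2 : la.length ≤ 2 ^ n := le_trans hl_n (hx2x n)
      have e3 : n ^ 2 * (la.length * 2 ^ (n ^ 2)) ≤ 2 ^ (n ^ 2 + 3 * n) := by
        calc n ^ 2 * (la.length * 2 ^ (n ^ 2)) ≤
            2 ^ (2 * n) * (2 ^ n * 2 ^ (n ^ 2)) :=
              Nat.mul_le_mul e1 (Nat.mul_le_mul e2 le_rfl)
          _ = 2 ^ (n ^ 2 + 3 * n) := by rw [← pow_add, ← pow_add]; ring_nf
      have e4 : 1 + (statesOf 0 (nrm 0 A)).dedup.length + 1 ≤ 2 ^ (2 * n) + 2 := by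
        have := le_trans hQn e1
        omega
      have e5 : 2 ^ (2 * n) + 2 + 2 ^ n ≤ 3 * 2 ^ (n ^ 2 + 3 * n) := by
        have g1 : 2 ^ (2 * n) ≤ 2 ^ (n ^ 2 + 3 * n) :=
          Nat.pow_le_pow_right (by norm_num) (by nlinarith)
        have g2 : 2 ^ n ≤ 2 ^ (n ^ 2 + 3 * n) :=
          Nat.pow_le_pow_right (by norm_num) (by nlinarith)
        have g3 : (2:ℕ) ≤ 2 ^ (n ^ 2 + 3 * n) := by
          calc (2:ℕ) = 2 ^ 1 := by norm_num
            _ ≤ 2 ^ (n ^ 2 + 3 * n) := Nat.pow_le_pow_right (by norm_num) (by nlinarith)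
        omega
      calc n ^ 2 * (la.length * 2 ^ (n ^ 2)) + la.length +
            (1 + (statesOf 0 (nrm 0 A)).dedup.length) + 1
          ≤ 2 ^ (n ^ 2 + 3 * n) + 2 ^ n + (2 ^ (2 * n) + 2) := by omega
        _ ≤ 2 ^ (n ^ 2 + 3 * n) + 3 * 2 ^ (n ^ 2 + 3 * n) := by omega
        _ = 4 * 2 ^ (n ^ 2 + 3 * n) := by ring
        _ = 2 ^ (n ^ 2 + 3 * n + 2) := by rw [pow_add]; ring
        _ ≤ 2 ^ (n ^ 2 + 3 * n + 3) := Nat.pow_le_pow_right (by norm_num) (by omega)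
    calc _ ≤ n ^ 2 * (la.length * 2 ^ (n ^ 2)) + la.length +
          (1 + (statesOf 0 (nrm 0 A)).dedup.length) + 1 := by
          simp only [List.length_append, List.length_map, List.length_cons]
          have hfil := List.length_filter_le
            (fun q => decide (q ∉ (nrm 0 A).2.2)) (statesOf 0 (nrm 0 A)).dedup
          have := hT1
          omega
      _ ≤ 2 ^ (n ^ 2 + 3 * n + 3) := htot
      _ ≤ 2 ^ (n ^ (cExp 0)) := by
          apply Nat.pow_le_pow_right (by norm_num)
          show n ^ 2 + 3 * n + 3 ≤ n ^ 4
          have hm : 3 * n ≤ n ^ 2 := by nlinarith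
          have hm2 : 3 ≤ n ^ 2 := by nlinarith
          have h3 : n ^ 2 + 3 * n + 3 ≤ 3 * n ^ 2 := by omega
          calc n ^ 2 + 3 * n + 3 ≤ 3 * n ^ 2 := h3
            _ ≤ n ^ 2 * n ^ 2 := Nat.mul_le_mul_right _ hm2
            _ = n ^ 4 := by ring
  | succ k ih =>
    intro A
    have hx2x : ∀ x : ℕ, x ≤ 2 ^ x := fun x => (Nat.lt_two_pow_self (n := x)).le
    set n := SA.size (k+1) A + la.length + 2 with hn
    have hn3 : 3 ≤ n := by have := size_pos (k+1) A; omega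
    set E := n ^ cExp k with hE
    have hEn : n ≤ E := by
      rw [hE]
      exact Nat.le_self_pow (by have := cExp_pos k; omega) n
    set Gn := E * n + (3 * k + 4) * n + 3 * k with hG
    have hGn : n ≤ Gn := by
      have : n * 1 ≤ E * n := Nat.mul_le_mul (by omega) (by omega)
      omega
    -- bound on the label automata
    have hlab : ∀ (q : ℕ) (bv : List Bool),
        SA.size k (foldInter la k (List.zipWith
          (fun t b => if b then t.2.1 else compl la k t.2.1)
          (A.1.filter fun t => t.1 = q) bv)) ≤ 2 ^ Gn := by
      intro q bv
      set Ts := A.1.filter fun t => t.1 = q with hTs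
      set comps := List.zipWith (fun t b => if b then t.2.1 else compl la k t.2.1) Ts bv
        with hcomps
      have hTslen : Ts.length ≤ n := by
        have h1 : Ts.length ≤ A.1.length := by
          rw [hTs]; exact List.length_filter_le _ _
        have h2 := length_fst_succ_le k A
        omega
      have hlen : comps.length ≤ n := by
        rw [hcomps, List.length_zipWith]
        omega
      have hcomp : ∀ comp ∈ comps, SA.size k comp ≤ 2 ^ E := by
        intro comp hcomp
        obtain ⟨i, hilen, hieq⟩ := List.mem_iff_getElem.1 hcomp
        rw [hcomps, List.length_zipWith] at hilen
        have hiT : i < Ts.length := by omega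
        have hib : i < bv.length := by omega
        simp only [hcomps, List.getElem_zipWith] at hieq
        have htmem : Ts[i] ∈ Ts := List.getElem_mem _
        have htA : Ts[i] ∈ A.1.filter fun t => t.1 = q := by rw [← hTs]; exact htmem
        have hA1 : Ts[i] ∈ A.1 := (List.mem_filter.1 htA).1
        have hsz : SA.size k Ts[i].2.1 ≤ SA.size (k+1) A := label_size_le hA1
        have hszn : SA.size k Ts[i].2.1 + la.length + 2 ≤ n := by omega
        cases hb : bv[i] with
        | true =>
          rw [hb, if_pos rfl] at hieq
          rw [← hieq]
          calc SA.size k Ts[i].2.1 ≤ n := by omega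
            _ ≤ 2 ^ n := hx2x n
            _ ≤ 2 ^ E := Nat.pow_le_pow_right (by norm_num) hEn
        | false =>
          rw [hb] at hieq
          simp only [Bool.false_eq_true, if_false] at hieq
          rw [← hieq]
          calc SA.size k (compl la k Ts[i].2.1)
              ≤ 2 ^ ((SA.size k Ts[i].2.1 + la.length + 2) ^ cExp k) := ih Ts[i].2.1
            _ ≤ 2 ^ (n ^ cExp k) :=
                Nat.pow_le_pow_right (by norm_num) (Nat.pow_le_pow_left hszn _)
            _ = 2 ^ E := by rw [hE]
      have hbase : la.length + 3 * k + 2 ≤ 2 ^ (n + 3 * k) := by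
        calc la.length + 3 * k + 2 ≤ n + 3 * k := by omega
          _ ≤ 2 ^ (n + 3 * k) := hx2x _
      have hKpow : (7 * k + 8) ^ comps.length ≤ 2 ^ ((3 * k + 3) * n) := by
        calc (7 * k + 8) ^ comps.length ≤ (2 ^ (3 * k + 3)) ^ comps.length :=
              Nat.pow_le_pow_left (seven_k_le k) _
          _ = 2 ^ ((3 * k + 3) * comps.length) := by rw [← pow_mul]
          _ ≤ 2 ^ ((3 * k + 3) * n) :=
              Nat.pow_le_pow_right (by norm_num) (Nat.mul_le_mul_left _ hlen)
      have hprod : (comps.map (SA.size k)).prod ≤ 2 ^ (E * n) := by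
        calc (comps.map (SA.size k)).prod ≤ (2 ^ E) ^ comps.length :=
              prod_map_le_pow hcomp
          _ = 2 ^ (E * comps.length) := by rw [← pow_mul]
          _ ≤ 2 ^ (E * n) :=
              Nat.pow_le_pow_right (by norm_num) (Nat.mul_le_mul_left _ hlen)
      calc SA.size k (foldInter la k comps)
          ≤ (la.length + 3 * k + 2) * (7 * k + 8) ^ comps.length *
            (comps.map (SA.size k)).prod := size_foldInter la k comps
        _ ≤ 2 ^ (n + 3 * k) * 2 ^ ((3 * k + 3) * n) * 2 ^ (E * n) :=
            Nat.mul_le_mul (Nat.mul_le_mul hbase hKpow) hprod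
        _ = 2 ^ Gn := by
            rw [← pow_add, ← pow_add, hG]
            congr 1
            ring
    -- bound on the number of sections
    have hsecs : ∀ (q : ℕ) (bv : List Bool),
        bv.length = (A.1.filter fun t => t.1 = q).length →
        (((((A.1.filter fun t => t.1 = q).zip bv).filter fun x => x.2).map
          fun x => x.1.2.2).sections).length ≤ 2 ^ n := by
      intro q bv hbvlen
      set Ts := A.1.filter fun t => t.1 = q with hTs
      rw [length_sections, List.map_map]
      calc ((((Ts.zip bv).filter fun x => x.2).map
            (List.length ∘ fun x => x.1.2.2)).prod)
          ≤ ((Ts.zip bv).map fun x => x.1.2.2.length + 1).prod := by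
            apply prod_map_filter_le
            · intro x _; exact Nat.le_succ _
            · intro x _; omega
        _ ≤ 2 ^ ((Ts.zip bv).map fun x => x.1.2.2.length + 1).sum :=
            prod_le_two_pow_sum _
        _ ≤ 2 ^ n := by
            apply Nat.pow_le_pow_right (by norm_num)
            have heq : (Ts.zip bv).map (fun x => x.1.2.2.length + 1) =
                Ts.map fun t => t.2.2.length + 1 := by
              rw [show ((Ts.zip bv).map fun x => x.1.2.2.length + 1) =
                  ((Ts.zip bv).map Prod.fst).map (fun t => t.2.2.length + 1) by
                rw [List.map_map]; rfl]
              rw [List.map_fst_zip (le_of_eq hbvlen.symm)]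
            rw [heq]
            have h1 : (Ts.map fun t => t.2.2.length + 1).sum ≤
                (A.1.map fun t => t.2.2.length + 1).sum := by
              rw [hTs]; exact sum_map_filter_le
            have h2 := tgtsum_succ_le k A
            omega
    -- overall
    rw [sizeS_eq, show (compl la (k+1) A).1 =
        (((statesOf (k+1) A).dedup.flatMap fun q =>
          (boolVecs (A.1.filter fun t => t.1 = q).length).flatMap fun bv =>
            (((((A.1.filter fun t => t.1 = q).zip bv).filter fun x => x.2).map
                fun x => x.1.2.2).sections).map
              fun pick =>
                (q, foldInter la k (List.zipWith
                      (fun t b => if b then t.2.1 else compl la k t.2.1)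
                      (A.1.filter fun t => t.1 = q) bv),
                  pick))
        ++ [(boundOf (k+1) A + 1, allSA la k, ([] : List ℕ))]) from rfl,
      show (compl la (k+1) A).2.2 =
        (boundOf (k+1) A + 1) :: (statesOf (k+1) A).dedup.filter fun q => q ∉ A.2.2
        from rfl]
    set cost := fun t : ℕ × SA α k × List ℕ => SA.size k t.2.1 + t.2.2.length + 1
      with hcost
    have hQlen : (statesOf (k+1) A).dedup.length ≤ n := by
      have h1 := List.Sublist.length_le (List.dedup_sublist (statesOf (k+1) A))
      have h2 := statesOf_succ_length k A
      omega
    have hmain : (((statesOf (k+1) A).dedup.flatMap fun q =>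
        (boolVecs (A.1.filter fun t => t.1 = q).length).flatMap fun bv =>
          (((((A.1.filter fun t => t.1 = q).zip bv).filter fun x => x.2).map
              fun x => x.1.2.2).sections).map
            fun pick =>
              (q, foldInter la k (List.zipWith
                    (fun t b => if b then t.2.1 else compl la k t.2.1)
                    (A.1.filter fun t => t.1 = q) bv),
                pick)).map cost).sum ≤
        n * (2 ^ n * (2 ^ n * (2 ^ Gn + n + 1))) := by
      rw [sum_map_flatMap]
      refine le_trans
        (sum_map_le_of_le (m := 2 ^ n * (2 ^ n * (2 ^ Gn + n + 1))) ?_)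
        (Nat.mul_le_mul_right _ hQlen)
      intro q _
      rw [sum_map_flatMap]
      refine le_trans (sum_map_le_of_le (m := 2 ^ n * (2 ^ Gn + n + 1)) ?_) ?_
      swap
      · rw [length_boolVecs]
        refine Nat.mul_le_mul_right _ (Nat.pow_le_pow_right (by norm_num) ?_)
        have h1 : (A.1.filter fun t => t.1 = q).length ≤ A.1.length :=
          List.length_filter_le _ _
        have h2 := length_fst_succ_le k A
        omega
      intro bv hbv
      have hbvlen := mem_boolVecs.1 hbv
      rw [List.map_map]
      refine le_trans (sum_map_le_of_le (m := 2 ^ Gn + n + 1) ?_)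
        (Nat.mul_le_mul_right _ (hsecs q bv hbvlen))
      intro pick hpick
      show cost (q, _, pick) ≤ 2 ^ Gn + n + 1
      have hpl : pick.length ≤ n := by
        have h1 := List.mem_sections_length hpick
        have h2 : ((((A.1.filter fun t => t.1 = q).zip bv).filter fun x => x.2).map
            fun x => x.1.2.2).length ≤ (A.1.filter fun t => t.1 = q).length := by
          rw [List.length_map]
          calc (((A.1.filter fun t => t.1 = q).zip bv).filter fun x => x.2).length
              ≤ ((A.1.filter fun t => t.1 = q).zip bv).length :=
                List.length_filter_le _ _
            _ ≤ (A.1.filter fun t => t.1 = q).length := by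
                rw [List.length_zip]; omega
        have h3 : (A.1.filter fun t => t.1 = q).length ≤ A.1.length :=
          List.length_filter_le _ _
        have h4 := length_fst_succ_le k A
        omega
      have hl := hlab q bv
      rw [hcost]
      dsimp only
      omega
    have hqtcost : cost (boundOf (k+1) A + 1, allSA la k, ([] : List ℕ)) =
        la.length + 3 * k + 3 := by
      rw [hcost]
      show SA.size k (allSA la k) + ([] : List ℕ).length + 1 = _
      rw [size_allSA]
      simp
    have hFlen : ((boundOf (k+1) A + 1) ::
        (statesOf (k+1) A).dedup.filter fun q => q ∉ A.2.2).length ≤ 1 + n := by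
      rw [List.length_cons]
      have h1 := List.length_filter_le (fun q => decide (q ∉ A.2.2))
        (statesOf (k+1) A).dedup
      omega
    rw [List.map_append, List.sum_append]
    have hsing : ([(boundOf (k+1) A + 1, allSA la k, ([] : List ℕ))].map cost).sum =
        la.length + 3 * k + 3 := by
      rw [List.map_singleton, List.sum_singleton, hqtcost]
    rw [hsing]
    -- final arithmetic
    have hfinal : n * (2 ^ n * (2 ^ n * (2 ^ Gn + n + 1))) +
        (la.length + 3 * k + 3) + (1 + n) + 1 ≤ 2 ^ (Gn + 3 * n + 3 * k + 4) := by
      have e0 : n + 1 ≤ 2 ^ Gn := by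
        calc n + 1 ≤ 2 ^ n := by
              have := hx2x n
              have h2 : n < 2 ^ n := Nat.lt_two_pow_self (n := n)
              omega
          _ ≤ 2 ^ Gn := Nat.pow_le_pow_right (by norm_num) hGn
      have e1 : n * (2 ^ n * (2 ^ n * (2 ^ Gn + n + 1))) ≤ 2 ^ (Gn + 3 * n + 1) := by
        calc n * (2 ^ n * (2 ^ n * (2 ^ Gn + n + 1)))
            ≤ 2 ^ n * (2 ^ n * (2 ^ n * (2 ^ Gn + 2 ^ Gn))) := by
              refine Nat.mul_le_mul (hx2x n) (Nat.mul_le_mul_left _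
                (Nat.mul_le_mul_left _ ?_))
              omega
          _ = 2 ^ (Gn + 3 * n + 1) := by
              rw [show (2:ℕ) ^ Gn + 2 ^ Gn = 2 ^ (Gn + 1) by rw [pow_succ]; ring]
              rw [← pow_add, ← pow_add, ← pow_add]
              congr 1
              ring
      have e2 : la.length + 3 * k + 3 + (1 + n) + 1 ≤ 2 ^ (n + 3 * k + 3) := by
        calc la.length + 3 * k + 3 + (1 + n) + 1 ≤ 2 * n + 3 * k + 5 := by omega
          _ ≤ 2 ^ 3 * (n + 3 * k) := by omega
          _ ≤ 2 ^ 3 * 2 ^ (n + 3 * k) := Nat.mul_le_mul_left _ (hx2x _)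
          _ = 2 ^ (n + 3 * k + 3) := by rw [← pow_add]; congr 1; omega
      have e3 : 2 ^ (n + 3 * k + 3) ≤ 2 ^ (Gn + 3 * n + 1) :=
        Nat.pow_le_pow_right (by norm_num) (by omega)
      calc n * (2 ^ n * (2 ^ n * (2 ^ Gn + n + 1))) +
          (la.length + 3 * k + 3) + (1 + n) + 1
          ≤ 2 ^ (Gn + 3 * n + 1) + 2 ^ (n + 3 * k + 3) := by omega
        _ ≤ 2 ^ (Gn + 3 * n + 1) + 2 ^ (Gn + 3 * n + 1) := by omega
        _ = 2 ^ (Gn + 3 * n + 2) := by rw [pow_succ]; ring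
        _ ≤ 2 ^ (Gn + 3 * n + 3 * k + 4) :=
            Nat.pow_le_pow_right (by norm_num) (by omega)
    have hexp : Gn + 3 * n + 3 * k + 4 ≤ n ^ cExp (k + 1) := by
      have hu1 : 1 ≤ E * n := by
        have : 1 * 1 ≤ E * n := Nat.mul_le_mul (by omega) (by omega)
        omega
      have hun : n ≤ E * n := by
        have : 1 * n ≤ E * n := Nat.mul_le_mul_right _ (by omega)
        omega
      have h_kn : k * n ≤ k * (E * n) := Nat.mul_le_mul_left k hun
      have h_k : k ≤ k * (E * n) := Nat.le_mul_of_pos_right k (by omega)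
      have hsum : Gn + 3 * n + 3 * k + 4 ≤ (9 * k + 12) * (E * n) := by
        rw [hG]
        nlinarith [h_kn, h_k, hun, hu1]
      have h3 : 9 * k + 12 ≤ n ^ (2 * k + 11) := by
        calc 9 * k + 12 ≤ 3 ^ (2 * k + 11) := nine_k_le k
          _ ≤ n ^ (2 * k + 11) := Nat.pow_le_pow_left hn3 _
      calc Gn + 3 * n + 3 * k + 4 ≤ (9 * k + 12) * (E * n) := hsum
        _ ≤ n ^ (2 * k + 11) * (E * n) := Nat.mul_le_mul_right _ h3
        _ = n ^ cExp (k + 1) := by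
            rw [hE, show cExp (k + 1) = cExp k + 2 * k + 12 from rfl]
            ring
    calc _ ≤ n * (2 ^ n * (2 ^ n * (2 ^ Gn + n + 1))) +
          (la.length + 3 * k + 3) + (1 + n) + 1 :=
          Nat.add_le_add_right
            (Nat.add_le_add (Nat.add_le_add_right hmain _) hFlen) 1
      _ ≤ 2 ^ (Gn + 3 * n + 3 * k + 4) := hfinal
      _ ≤ 2 ^ (n ^ cExp (k + 1)) := Nat.pow_le_pow_right (by norm_num) hexp

/-- For every `n`-store multi-automaton `A` (here `n = k + 1`; `A` is
assumed total when `n = 1`), the complement automaton `Ā` obtained by the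
inversion-of-target-sets construction satisfies `L(Ā^{q^j}) = complement of L(A^{q^j})`
for every control state `p^j` (including the treatment of the undefined store `∇`), and
the construction is at most exponential in the size of `A` — rendered as the existence of
such a complement multi-automaton of size at most `2^(poly(|A|))`.  In particular, regular
sets of configurations of order-`n` (A)PDSs are closed under complementation. -/
theorem complement_multi_automaton (k : ℕ) :
    (∃ c : ℕ,
      ∀ (α P : Type) [Finite α] [Finite P] (M : MSA α P k),
        SA.IsTotal k M.core →
        ∃ Mbar : MSA α P k,
          Mbar.Lang = M.Langᶜ ∧
          Mbar.size ≤ 2 ^ ((M.size + Nat.card α + 2) ^ c)) ∧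
    (∀ (α P : Type) [Finite α] [Finite P] (C : Set (AConf P α k)),
        Regular C → Regular Cᶜ) := by
  constructor
  · refine ⟨cExp k, ?_⟩
    intro α P _ _ M _
    have : Fintype α := Fintype.ofFinite α
    set la : List α := (Finset.univ : Finset α).toList with hla_def
    have hla : ∀ a : α, a ∈ la := fun a => by simp [hla_def]
    refine ⟨MSA.compl la M, MSA_compl_Lang hla M, ?_⟩
    have hlen : la.length = Nat.card α := by
      rw [hla_def, Finset.length_toList, Nat.card_eq_fintype_card, Finset.card_univ]
    have hsize : (MSA.compl la M).size = SA.size k (compl la k M.core) := rfl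
    have hMsize : M.size = SA.size k M.core := rfl
    rw [hsize, hMsize, ← hlen]
    exact compl_size la k M.core
  · intro α P _ _ C hC
    obtain ⟨M, hM⟩ := hC
    have : Fintype α := Fintype.ofFinite α
    set la : List α := (Finset.univ : Finset α).toList with hla_def
    have hla : ∀ a : α, a ∈ la := fun a => by simp [hla_def]
    exact ⟨MSA.compl la M, by rw [MSA_compl_Lang hla M, hM]⟩

end HOPDS
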